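/- arXiv:2006.08501 — 7 statements merged into one kernel-verified Lean document; each statement's English description precedes it below -/
import Mathlib

section
/- For every n ≥ 1, the identity map id : X_n → X_n is pure in the cone CP(X_n, X_n) of completely positive linear maps: whenever ϑ, ω : X_n → X_n are completely positive linear maps with ϑ + ω = id, there exists s ∈ [0,1] such that ϑ = s·id and ω = (1−s)·id. (This is the content of the theorem that the identity map on the free-group operator system S_n is pure, transported through the complete order isomorphism S_n^d ≅ X_n.) -/
open scoped ComplexOrder

/-- The `(m·|ι|) × (m·|ι|)` matrix obtained from an `m × m` array of `ι × ι` matrices. -/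
def blockMat {ι : Type} {m : ℕ} (x : Fin m → Fin m → Matrix ι ι ℂ) :
    Matrix (Fin m × ι) (Fin m × ι) ℂ :=
  Matrix.of fun p q => x p.1 q.1 p.2 q.2

/-- Complete positivity for a linear map between matrix operator systems
(given as subspaces of matrix algebras): every positive semidefinite `m × m` block
matrix with entries in `S` is sent (entrywise) to a positive semidefinite block matrix. -/
def IsCP {ι κ : Type} [Fintype ι] [Fintype κ]
    (S : Submodule ℂ (Matrix ι ι ℂ)) (T : Submodule ℂ (Matrix κ κ ℂ))
    (φ : S →ₗ[ℂ] T) : Prop :=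
  ∀ (m : ℕ) (x : Fin m → Fin m → S),
    (blockMat fun i j => (x i j : Matrix ι ι ℂ)).PosSemidef →
    (blockMat fun i j => (φ (x i j) : Matrix κ κ ℂ)).PosSemidef

/-- The block-diagonal matrix `⊕ₖ [[α, βₖ],[γₖ, α]]` in `M_{2n}(ℂ)`. -/
def xMat (n : ℕ) (α : ℂ) (β γ : Fin n → ℂ) :
    Matrix (Fin n × Fin 2) (Fin n × Fin 2) ℂ :=
  Matrix.of fun p q => if p.1 = q.1 then !![α, β p.1; γ p.1, α] p.2 q.2 else 0

/-- The matrix operator system `Xₙ = { ⊕ₖ [[α, βₖ],[γₖ, α]] } ⊆ M_{2n}(ℂ)`,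
completely order isomorphic to the dual of the free-group operator system `Sₙ`. -/
noncomputable def XSys (n : ℕ) : Submodule ℂ (Matrix (Fin n × Fin 2) (Fin n × Fin 2) ℂ) :=
  Submodule.span ℂ {x | ∃ α β γ, x = xMat n α β γ}

namespace XnAux

open Complex ComplexConjugate Matrix

variable {n : ℕ}

lemma two_apply (a b c d : ℂ) (i j : Fin 2) :
    !![a, b; c, d] i j =
      if i = 0 then (if j = 0 then a else b) else (if j = 0 then c else d) := by
  fin_cases i <;> fin_cases j <;> simp

lemma xMat_apply (α : ℂ) (β γ : Fin n → ℂ) (p q : Fin n × Fin 2) :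
    xMat n α β γ p q =
      if p.1 = q.1 then
        (if p.2 = 0 then (if q.2 = 0 then α else β p.1)
         else (if q.2 = 0 then γ p.1 else α))
      else 0 := by
  show (if p.1 = q.1 then !![α, β p.1; γ p.1, α] p.2 q.2 else 0) = _
  rw [two_apply]

lemma xMat_a (α : ℂ) (β γ : Fin n → ℂ) (k l : Fin n) :
    xMat n α β γ (k, 0) (l, 0) = if k = l then α else 0 := by
  simp [xMat_apply]

lemma xMat_b (α : ℂ) (β γ : Fin n → ℂ) (k l : Fin n) :
    xMat n α β γ (k, 0) (l, 1) = if k = l then β k else 0 := by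
  rw [xMat_apply]
  split_ifs with h h2 <;> simp_all

lemma xMat_c (α : ℂ) (β γ : Fin n → ℂ) (k l : Fin n) :
    xMat n α β γ (k, 1) (l, 0) = if k = l then γ k else 0 := by
  rw [xMat_apply]
  split_ifs with h h2 <;> simp_all

/-- `xMat` as a linear map. -/
def xmatL (n : ℕ) : (ℂ × (Fin n → ℂ) × (Fin n → ℂ)) →ₗ[ℂ] Matrix (Fin n × Fin 2) (Fin n × Fin 2) ℂ where
  toFun c := xMat n c.1 c.2.1 c.2.2
  map_add' c d := by
    ext p q
    simp only [Matrix.add_apply, xMat_apply, Prod.fst_add, Prod.snd_add, Pi.add_apply]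
    split_ifs <;> simp
  map_smul' c d := by
    ext p q
    simp only [Matrix.smul_apply, xMat_apply, Prod.smul_fst, Prod.smul_snd, Pi.smul_apply,
      smul_eq_mul, RingHom.id_apply]
    split_ifs <;> simp

lemma xmatL_apply (α : ℂ) (β γ : Fin n → ℂ) : xmatL n (α, β, γ) = xMat n α β γ := rfl


lemma xMat_zero : xMat n 0 0 0 = 0 := by
  ext p q
  rw [xMat_apply]
  split_ifs <;> simp

lemma xMat_add' (α1 α2 : ℂ) (β1 γ1 β2 γ2 : Fin n → ℂ) :
    xMat n α1 β1 γ1 + xMat n α2 β2 γ2 = xMat n (α1 + α2) (β1 + β2) (γ1 + γ2) := by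
  ext p q
  simp only [Matrix.add_apply, xMat_apply, Pi.add_apply]
  split_ifs <;> simp

lemma xMat_smul' (c α : ℂ) (β γ : Fin n → ℂ) :
    c • xMat n α β γ = xMat n (c * α) (c • β) (c • γ) := by
  ext p q
  simp only [Matrix.smul_apply, xMat_apply, Pi.smul_apply, smul_eq_mul]
  split_ifs <;> simp

lemma xMat_sub' (α1 α2 : ℂ) (β1 γ1 β2 γ2 : Fin n → ℂ) :
    xMat n α1 β1 γ1 - xMat n α2 β2 γ2 = xMat n (α1 - α2) (β1 - β2) (γ1 - γ2) := by
  ext p q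
  simp only [Matrix.sub_apply, xMat_apply, Pi.sub_apply]
  split_ifs <;> simp

lemma xMat_sum' {m : Type*} (s : Finset m) (A : m → ℂ) (B C : m → (Fin n → ℂ)) :
    (∑ k ∈ s, xMat n (A k) (B k) (C k))
      = xMat n (∑ k ∈ s, A k) (∑ k ∈ s, B k) (∑ k ∈ s, C k) := by
  induction s using Finset.cons_induction with
  | empty => simp [xMat_zero]
  | cons a s ha ih => simp only [Finset.sum_cons, ih, xMat_add']

lemma xMat_congr {α α' : ℂ} {β γ β' γ' : Fin n → ℂ}
    (hα : α = α') (hβ : ∀ k, β k = β' k) (hγ : ∀ k, γ k = γ' k) :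
    xMat n α β γ = xMat n α' β' γ' := by
  rw [hα, funext hβ, funext hγ]

lemma mem_XSys {x : Matrix (Fin n × Fin 2) (Fin n × Fin 2) ℂ} :
    x ∈ XSys n ↔ ∃ α β γ, x = xMat n α β γ := by
  constructor
  · intro hx
    induction hx using Submodule.span_induction with
    | mem x h => exact h
    | zero => exact ⟨0, 0, 0, by rw [← xmatL_apply]; exact xMat_zero.symm⟩
    | add x y _ _ hx hy =>
        obtain ⟨a, b, c, rfl⟩ := hx
        obtain ⟨a', b', c', rfl⟩ := hy
        exact ⟨a + a', b + b', c + c',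
          by rw [← xmatL_apply, ← xmatL_apply, ← xmatL_apply, ← map_add]; rfl⟩
    | smul c x _ hx =>
        obtain ⟨a, b, g, rfl⟩ := hx
        exact ⟨c * a, c • b, c • g, by rw [← xmatL_apply, ← xmatL_apply, ← (xmatL n).map_smul]; rfl⟩
  · rintro ⟨α, β, γ, rfl⟩; exact Submodule.subset_span ⟨α, β, γ, rfl⟩

/-- hermitian entry extraction -/
lemma herm_gamma {α : ℂ} {β γ : Fin n → ℂ} (h : (xMat n α β γ).IsHermitian) (k : Fin n) :
    γ k = conj (β k) := by
  have h2 := congrFun (congrFun h ((k, 1) : Fin n × Fin 2)) (k, 0)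
  simpa [Matrix.conjTranspose_apply, xMat_apply] using h2.symm

lemma block2 {α : ℂ} {β γ : Fin n → ℂ} (h : (xMat n α β γ).PosSemidef) (k : Fin n) :
    (!![α, β k; γ k, α]).PosSemidef := by
  have h2 := h.submatrix (fun i : Fin 2 => ((k, i) : Fin n × Fin 2))
  have e : (xMat n α β γ).submatrix (fun i : Fin 2 => ((k, i) : Fin n × Fin 2))
      (fun i : Fin 2 => ((k, i) : Fin n × Fin 2)) = !![α, β k; γ k, α] := by
    ext i j
    fin_cases i <;> fin_cases j <;> simp [Matrix.submatrix_apply, xMat_apply]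
  rwa [e] at h2

lemma psd2 {a b : ℂ} (h : (!![a, b; conj b, a]).PosSemidef) :
    a.im = 0 ∧ 0 ≤ a.re ∧ ‖b‖ ≤ a.re := by
  have form : ∀ v : Fin 2 → ℂ, dotProduct (star v) ((!![a, b; conj b, a]) *ᵥ v) =
      conj (v 0) * (a * v 0 + b * v 1) + conj (v 1) * (conj b * v 0 + a * v 1) := by
    intro v
    simp [dotProduct, Matrix.mulVec, Fin.sum_univ_two, mul_comm]
  have q1 := h.dotProduct_mulVec_nonneg ![1, 0]
  rw [form] at q1
  simp only [Matrix.cons_val_zero, Matrix.cons_val_one, Matrix.head_cons, _root_.map_one,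
    map_zero, mul_zero, mul_one, zero_mul, add_zero, zero_add, one_mul] at q1
  rw [Complex.nonneg_iff] at q1
  refine ⟨q1.2.symm, q1.1, ?_⟩
  rcases eq_or_ne b 0 with rfl | hb
  · simpa using q1.1
  have q2 := h.dotProduct_mulVec_nonneg ![b, -(‖b‖ : ℂ)]
  rw [form] at q2
  simp only [Matrix.cons_val_zero, Matrix.cons_val_one, Matrix.head_cons] at q2
  set r : ℝ := ‖b‖ with hr
  have hbb : conj b * b = ((r^2 : ℝ) : ℂ) := by
    rw [mul_comm, Complex.mul_conj, Complex.normSq_eq_norm_sq]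
  have haim : a = (a.re : ℝ) := by
    rw [Complex.ext_iff]; simp [q1.2.symm]
  have key : conj b * (a * b + b * -(r:ℂ)) + conj (-(r:ℂ)) * (conj b * b + a * -(r:ℂ))
      = ((2 * a.re * r^2 - 2 * r^3 : ℝ) : ℂ) := by
    have hc : conj (-(r:ℂ)) = -(r:ℂ) := by simp
    have h1 : conj b * (a * b + b * -(r:ℂ)) + conj (-(r:ℂ)) * (conj b * b + a * -(r:ℂ))
        = (a - 2*(r:ℂ)) * (conj b * b) + (r:ℂ) * (r:ℂ) * a := by rw [hc]; ring
    rw [h1, hbb]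
    conv_lhs => rw [haim]
    push_cast
    ring
  rw [key] at q2
  rw [Complex.zero_le_real] at q2
  have hr0 : 0 < r := by
    simpa [hr] using (norm_pos_iff.mpr hb)
  nlinarith [q2, mul_pos hr0 hr0]

/-- positivity of the extreme elements -/
lemma eu_psd (u : Fin n → ℂ) (hu : ∀ k, ‖u k‖ = 1) :
    (xMat n 1 u (fun k => conj (u k))).PosSemidef := by
  have huc : ∀ k, conj (u k) * u k = 1 := by
    intro k
    rw [mul_comm, Complex.mul_conj, Complex.normSq_eq_norm_sq, hu k]
    norm_num
  refine .of_dotProduct_mulVec_nonneg ?_ ?_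
  · ext ⟨k, i⟩ ⟨l, j⟩
    simp only [Matrix.conjTranspose_apply, xMat_apply]
    rcases eq_or_ne k l with rfl | hkl
    · fin_cases i <;> fin_cases j <;> simp
    · simp [hkl, Ne.symm hkl]
  · intro v
    have hmv : ∀ (k : Fin n) (i : Fin 2), ((xMat n 1 u (fun k => conj (u k))) *ᵥ v) (k, i)
        = (if i = 0 then v (k, 0) + u k * v (k, 1) else conj (u k) * v (k, 0) + v (k, 1)) := by
      intro k i
      show ∑ q : Fin n × Fin 2, xMat n 1 u (fun k => conj (u k)) (k, i) q * v q = _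
      rw [Fintype.sum_prod_type]
      rw [Finset.sum_eq_single k]
      · rw [Fin.sum_univ_two]
        fin_cases i <;> simp [xMat_apply]
      · intro l _ hl
        rw [Fin.sum_univ_two]
        simp [xMat_apply, Ne.symm hl]
      · simp
    have key : dotProduct (star v) ((xMat n 1 u (fun k => conj (u k))) *ᵥ v)
        = ∑ k : Fin n, conj (v (k, 0) + u k * v (k, 1)) * (v (k, 0) + u k * v (k, 1)) := by
      show ∑ p : Fin n × Fin 2, conj (v p) * ((xMat n 1 u (fun k => conj (u k))) *ᵥ v) p = _
      rw [Fintype.sum_prod_type]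
      refine Finset.sum_congr rfl fun k _ => ?_
      rw [Fin.sum_univ_two, hmv k 0, hmv k 1]
      have h1 := huc k
      simp only [if_pos rfl, if_neg (by norm_num : (1 : Fin 2) ≠ 0), reduceIte,
        map_add, _root_.map_mul]
      linear_combination (-(conj (v (k, 1))) * v (k, 1)) * h1
    rw [key]
    apply Finset.sum_nonneg
    intro k _
    have := star_mul_self_nonneg (v (k, 0) + u k * v (k, 1))
    simpa using this

lemma psd_of_blockMat_one {ι : Type} [Fintype ι] {x : Fin 1 → Fin 1 → Matrix ι ι ℂ}
    (h : (blockMat x).PosSemidef) : (x 0 0).PosSemidef := by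
  have e : x 0 0 = (blockMat x).submatrix (fun a : ι => ((0 : Fin 1), a)) (fun a => (0, a)) := by
    ext a b; rfl
  rw [e]; exact h.submatrix _

lemma blockMat_one_psd {ι : Type} [Fintype ι] {x : Fin 1 → Fin 1 → Matrix ι ι ℂ}
    (h : (x 0 0).PosSemidef) : (blockMat x).PosSemidef := by
  have e : blockMat x = (x 0 0).submatrix (Prod.snd) (Prod.snd) := by
    ext ⟨a, p⟩ ⟨b, q⟩
    have ha : a = 0 := Subsingleton.elim _ _
    have hb : b = 0 := Subsingleton.elim _ _
    subst ha hb; rfl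
  rw [e]; exact h.submatrix _

/-- extremality of the unit circle generators, scalar version -/
lemma tri {a : ℝ} {u b : ℂ} (ha1 : a ≤ 1) (hu : ‖u‖ = 1)
    (hb : ‖b‖ ≤ a) (hub : ‖u - b‖ ≤ 1 - a) : b = (a : ℂ) * u := by
  set r := (u * conj b).re with hrdef
  have habs : ‖u * conj b‖ = ‖b‖ := by
    rw [norm_mul, hu, Complex.norm_conj, one_mul]
  have hra : r ≤ a := le_trans (Complex.re_le_norm _) (by rw [habs]; exact hb)
  have hsq : Complex.normSq (u - b) ≤ (1 - a) ^ 2 := by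
    rw [← Complex.sq_norm]
    have h0 : (0:ℝ) ≤ ‖u - b‖ := norm_nonneg _
    nlinarith
  rw [Complex.normSq_sub] at hsq
  have hnu : Complex.normSq u = 1 := by rw [Complex.normSq_eq_norm_sq, hu]; norm_num
  have hnb : Complex.normSq b = ‖b‖ ^ 2 := Complex.normSq_eq_norm_sq b
  have habs2 : r ^ 2 ≤ Complex.normSq b := by
    have h1 : |r| ≤ ‖b‖ := by
      rw [hrdef]; simpa [habs, hu] using Complex.abs_re_le_norm (u * conj b)
    rw [hnb, ← _root_.sq_abs r]
    exact pow_le_pow_left₀ (abs_nonneg r) h1 2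
  have har : a = r := by nlinarith [norm_nonneg b]
  have hnb2 : Complex.normSq b = a ^ 2 := by nlinarith [norm_nonneg b]
  have him : (u * conj b).im = 0 := by
    have h1 : Complex.normSq (u * conj b) = a ^ 2 := by
      rw [Complex.normSq_mul, hnu, one_mul, Complex.normSq_conj, hnb2]
    have h2 : r ^ 2 + (u * conj b).im ^ 2 = a ^ 2 := by
      rw [← h1, Complex.normSq_apply]; ring
    nlinarith [har]
  have hval : u * conj b = (a : ℂ) := by
    rw [Complex.ext_iff]
    constructor
    · simp [← hrdef, ← har]
    · simp [him]
  have huc : u * conj u = 1 := by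
    rw [Complex.mul_conj, hnu]; norm_num
  have hval' : conj u * b = (a : ℂ) := by
    have := congrArg conj hval
    simpa [_root_.map_mul, Complex.conj_conj, Complex.conj_ofReal, mul_comm] using this
  linear_combination u * hval' - b * huc

lemma solve_main (s1 s2 s3 s4 : ℝ) (x0 y0 x1 y1 : ℂ)
    (a2 : (-2)*x0 + (-2)*y0 = (s2:ℂ) - s1)
    (a3 : (I-1)*x0 + (-I-1)*y0 = (s3:ℂ) - s1)
    (a4 : (-I-1)*x0 + (I-1)*y0 = (s4:ℂ) - s1)
    (b2 : (-2)*x1 + (-2)*y1 = ((s2:ℂ) - s1) + s2*(-2))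
    (b3 : (I-1)*x1 + (-I-1)*y1 = ((s3:ℂ) - s1) + s3*(I-1))
    (b4 : (-I-1)*x1 + (I-1)*y1 = ((s4:ℂ) - s1) + s4*(-I-1)) :
    s2 = s1 ∧ s3 = s1 ∧ s4 = s1 ∧ x0 = 0 ∧ y0 = 0 ∧ x1 = s1 ∧ y1 = 0 := by
  have k1 : (s1:ℂ) - s2 = I * ((s3:ℂ) - s4) := by linear_combination b3 + b4 - b2
  rw [Complex.ext_iff] at k1
  simp only [Complex.sub_re, Complex.ofReal_re, Complex.mul_re, Complex.I_re, Complex.I_im,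
    Complex.sub_im, Complex.ofReal_im, Complex.mul_im] at k1
  obtain ⟨k1re, k1im⟩ := k1
  have hs2 : s2 = s1 := by linarith
  have hs43 : s4 = s3 := by linarith
  have hc2 : (s2:ℂ) = (s1:ℂ) := by rw [hs2]
  have hc4 : (s4:ℂ) = (s3:ℂ) := by rw [hs43]
  rw [hc2] at a2 b2
  rw [hc4] at a4 b4
  have hxy : x0 = y0 := by
    linear_combination (-I/2) * a3 + (I/2) * a4 + (x0 - y0) * Complex.I_sq
  have hx0 : x0 = 0 := by linear_combination (-1/4 : ℂ) * a2 + (1/2 : ℂ) * hxy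
  have hy0 : y0 = 0 := by linear_combination (-1/4 : ℂ) * a2 - (1/2 : ℂ) * hxy
  have hc3 : (s3:ℂ) = (s1:ℂ) := by linear_combination -a3 + (I-1)*hx0 + (-I-1)*hy0
  have hs3 : s3 = s1 := by exact_mod_cast hc3
  rw [hc3] at b3 b4
  have e1 : x1 + y1 = (s1:ℂ) := by linear_combination (-1/2 : ℂ) * b2
  have hx1 : x1 = (s1:ℂ) := by
    linear_combination (-I/2) * b3 + ((1 - I)/2) * e1 + ((x1 - y1 - (s1:ℂ))/2) * Complex.I_sq
  have hy1 : y1 = 0 := by linear_combination e1 - hx1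
  exact ⟨hs2, hs3, hs43.trans hs3, hx0, hy0, hx1, hy1⟩

lemma solve_zero (x y : ℂ) (a2 : (-2)*x + (-2)*y = 0) (a3 : (I-1)*x + (-I-1)*y = 0) :
    x = 0 ∧ y = 0 := by
  have hx : x = 0 := by
    linear_combination (-I/2) * a3 + ((-1+I)/4) * a2 + ((x - y)/2) * Complex.I_sq
  exact ⟨hx, by linear_combination (-1/2 : ℂ) * a2 - hx⟩

lemma solve_cc (s1 : ℝ) (x y : ℂ)
    (c2 : (-2)*x + (-2)*y = (s1:ℂ)*(-2))
    (c3 : (I-1)*x + (-I-1)*y = (s1:ℂ)*(-I-1)) :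
    x = 0 ∧ y = s1 := by
  have e1 : x + y = (s1:ℂ) := by linear_combination (-1/2 : ℂ) * c2
  have hx : x = 0 := by
    linear_combination (-I/2) * c3 + ((1-I)/2) * e1 + ((x - y + (s1:ℂ))/2) * Complex.I_sq
  exact ⟨hx, by linear_combination e1 - hx⟩

/-- the generators as elements of `XSys n` -/
def Esys (n : ℕ) (u : Fin n → ℂ) : XSys n :=
  ⟨xMat n 1 u (fun k => conj (u k)), Submodule.subset_span ⟨_, _, _, rfl⟩⟩

def Fsys (n : ℕ) (j : Fin n) : XSys n :=
  ⟨xMat n 0 (Pi.single j 1) 0, Submodule.subset_span ⟨_, _, _, rfl⟩⟩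

def Gsys (n : ℕ) (j : Fin n) : XSys n :=
  ⟨xMat n 0 0 (Pi.single j 1), Submodule.subset_span ⟨_, _, _, rfl⟩⟩

def E0sys (n : ℕ) : XSys n :=
  ⟨xMat n 1 0 0, Submodule.subset_span ⟨_, _, _, rfl⟩⟩

@[simp] lemma Esys_coe (u : Fin n → ℂ) :
    ((Esys n u : XSys n) : Matrix (Fin n × Fin 2) (Fin n × Fin 2) ℂ)
      = xMat n 1 u (fun k => conj (u k)) := rfl

@[simp] lemma Fsys_coe (j : Fin n) :
    ((Fsys n j : XSys n) : Matrix (Fin n × Fin 2) (Fin n × Fin 2) ℂ)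
      = xMat n 0 (Pi.single j 1) 0 := rfl

@[simp] lemma Gsys_coe (j : Fin n) :
    ((Gsys n j : XSys n) : Matrix (Fin n × Fin 2) (Fin n × Fin 2) ℂ)
      = xMat n 0 0 (Pi.single j 1) := rfl

@[simp] lemma E0sys_coe :
    ((E0sys n : XSys n) : Matrix (Fin n × Fin 2) (Fin n × Fin 2) ℂ) = xMat n 1 0 0 := rfl

lemma sum_single_smul (β : Fin n → ℂ) : (∑ k, β k • (Pi.single k 1 : Fin n → ℂ)) = β := by
  funext l
  simp [Finset.sum_apply, Pi.single_apply]

/-- decomposition of `Esys` along a single coordinate -/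
lemma Esys_decomp (j : Fin n) (t : ℂ) :
    Esys n (fun k => if k = j then t else 1)
      = Esys n (fun _ => 1) + (t - 1) • Fsys n j + (conj t - 1) • Gsys n j := by
  apply Subtype.ext
  simp only [Submodule.coe_add, SetLike.val_smul, Esys_coe, Fsys_coe, Gsys_coe]
  rw [xMat_smul', xMat_smul', xMat_add', xMat_add']
  refine xMat_congr (by simp) (fun k => ?_) (fun k => ?_)
  · by_cases hk : k = j <;> simp [hk, Pi.single_apply]
  · by_cases hk : k = j <;> simp [hk, Pi.single_apply]

/-- decomposition of the all-ones generator -/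
lemma Esys_one_decomp :
    Esys n (fun _ => 1) = E0sys n + (∑ k, Fsys n k) + (∑ k, Gsys n k) := by
  apply Subtype.ext
  simp only [Submodule.coe_add, AddSubmonoidClass.coe_finset_sum, Esys_coe, Fsys_coe, Gsys_coe,
    E0sys_coe]
  rw [xMat_sum' Finset.univ (fun _ => 0) (fun k => Pi.single k 1) (fun _ => 0),
    xMat_sum' Finset.univ (fun _ => 0) (fun _ => 0) (fun k => Pi.single k 1),
    xMat_add', xMat_add']
  have h1 : ∀ l, (∑ k : Fin n, (Pi.single k 1 : Fin n → ℂ)) l = 1 := by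
    intro l
    simp [Finset.sum_apply, Pi.single_apply]
  refine xMat_congr (by simp) (fun k => ?_) (fun k => ?_)
  · simp [h1 k]
  · simp [h1 k]

/-- general decomposition of an element of `XSys n` -/
lemma elem_decomp (α : ℂ) (β γ : Fin n → ℂ) (h : xMat n α β γ ∈ XSys n) :
    (⟨xMat n α β γ, h⟩ : XSys n)
      = α • E0sys n + (∑ k, β k • Fsys n k) + (∑ k, γ k • Gsys n k) := by
  apply Subtype.ext
  simp only [Submodule.coe_add, AddSubmonoidClass.coe_finset_sum, SetLike.val_smul,
    Fsys_coe, Gsys_coe, E0sys_coe]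
  simp only [xMat_smul']
  rw [xMat_sum' Finset.univ (fun k => β k * 0) (fun k => β k • (Pi.single k 1 : Fin n → ℂ)) (fun k => β k • (0:Fin n → ℂ)),
    xMat_sum' Finset.univ (fun k => γ k * 0) (fun k => γ k • (0:Fin n → ℂ)) (fun k => γ k • (Pi.single k 1 : Fin n → ℂ)),
    xMat_add', xMat_add']
  refine xMat_congr (by simp) (fun k => ?_) (fun k => ?_) <;>
    simp [Finset.sum_apply, Pi.single_apply]

end XnAux

open XnAux Complex ComplexConjugate Matrix in
/-- The identity map on `Xₙ` is pure in the cone `CP(Xₙ, Xₙ)`, for every `n ≥ 1`. -/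
theorem identity_map_on_Xn_is_pure (n : ℕ) (hn : 1 ≤ n)
    (ϑ ω : XSys n →ₗ[ℂ] XSys n)
    (hϑ : IsCP (XSys n) (XSys n) ϑ) (hω : IsCP (XSys n) (XSys n) ω)
    (hsum : ϑ + ω = LinearMap.id) :
    ∃ s : ℝ, 0 ≤ s ∧ s ≤ 1 ∧
      ϑ = (s : ℂ) • (LinearMap.id : XSys n →ₗ[ℂ] XSys n) ∧
      ω = ((1 - s : ℝ) : ℂ) • (LinearMap.id : XSys n →ₗ[ℂ] XSys n) := by
  classical
  have hsum' : ∀ z : XSys n, ϑ z + ω z = z := by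
    intro z
    have := DFunLike.congr_fun hsum z
    simpa using this
  -- complete positivity at level one
  have cpPos : ∀ (φ : XSys n →ₗ[ℂ] XSys n), IsCP (XSys n) (XSys n) φ →
      ∀ z : XSys n, ((z : Matrix (Fin n × Fin 2) (Fin n × Fin 2) ℂ)).PosSemidef →
        (((φ z : XSys n) : Matrix (Fin n × Fin 2) (Fin n × Fin 2) ℂ)).PosSemidef := by
    intro φ hφ z hz
    have h1 := hφ 1 (fun _ _ => z) (blockMat_one_psd hz)
    exact psd_of_blockMat_one h1
  set j0 : Fin n := ⟨0, hn⟩ with hj0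
  -- Step A : extremality
  have stepA : ∀ u : Fin n → ℂ, (∀ k, ‖u k‖ = 1) →
      ∃ a : ℝ, 0 ≤ a ∧ a ≤ 1 ∧ ϑ (Esys n u) = (a : ℂ) • Esys n u := by
    intro u hu
    have hpos : ((Esys n u : XSys n) : Matrix (Fin n × Fin 2) (Fin n × Fin 2) ℂ).PosSemidef :=
      eu_psd u hu
    have h1 := cpPos ϑ hϑ (Esys n u) hpos
    have h2 := cpPos ω hω (Esys n u) hpos
    obtain ⟨a, b, c, hzval⟩ := mem_XSys.mp (ϑ (Esys n u)).2
    rw [hzval] at h1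
    have hωval : ((ω (Esys n u) : XSys n) : Matrix (Fin n × Fin 2) (Fin n × Fin 2) ℂ)
        = xMat n (1 - a) (fun k => u k - b k) (fun k => conj (u k) - c k) := by
      have h3 : ω (Esys n u) = Esys n u - ϑ (Esys n u) := by
        rw [eq_sub_iff_add_eq, add_comm]; exact hsum' _
      rw [h3]
      push_cast [Submodule.coe_sub]
      rw [hzval, Esys_coe, ← xmatL_apply, ← xmatL_apply, ← xmatL_apply, ← map_sub]
      rfl
    rw [hωval] at h2
    -- extract scalar information
    have hherm1 := h1.1
    have hgamma : ∀ k, c k = conj (b k) := herm_gamma hherm1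
    have hdiag : a.im = 0 ∧ 0 ≤ a.re ∧ ∀ k, ‖b k‖ ≤ a.re := by
      have hk : ∀ k : Fin n, a.im = 0 ∧ 0 ≤ a.re ∧ ‖b k‖ ≤ a.re := by
        intro k
        have hb2 := block2 h1 k
        rw [hgamma k] at hb2
        exact psd2 hb2
      exact ⟨(hk j0).1, (hk j0).2.1, fun k => (hk k).2.2⟩
    have hdiag2 : 0 ≤ 1 - a.re ∧ ∀ k, ‖u k - b k‖ ≤ 1 - a.re := by
      have hk : ∀ k : Fin n, (1-a).im = 0 ∧ 0 ≤ (1-a).re ∧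
          ‖u k - b k‖ ≤ (1-a).re := by
        intro k
        have hb2 := block2 h2 k
        have hg2 : conj (u k) - c k = conj (u k - b k) := by
          rw [hgamma k, map_sub]
        rw [hg2] at hb2
        exact psd2 hb2
      constructor
      · have := (hk j0).2.1; simpa using this
      · intro k; have := (hk j0).1; have h5 := (hk k).2.2; simpa using h5
    obtain ⟨haim, hare, hbk⟩ := hdiag
    obtain ⟨hare2, hubk⟩ := hdiag2
    refine ⟨a.re, hare, by linarith, ?_⟩
    apply Subtype.ext
    rw [hzval]
    simp only [SetLike.val_smul, Esys_coe]
    rw [← xmatL_apply, ← xmatL_apply, ← (xmatL n).map_smul]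
    congr 1
    have hbu : ∀ k, b k = (a.re : ℂ) * u k := by
      intro k
      exact tri (by linarith) (hu k) (hbk k) (hubk k)
    refine Prod.ext ?_ (Prod.ext ?_ ?_)
    · simp only [Prod.smul_fst, smul_eq_mul, mul_one]
      rw [Complex.ext_iff]; constructor <;> simp [haim]
    · funext k
      simp only [Prod.smul_snd, Prod.smul_fst, Pi.smul_apply, smul_eq_mul]
      exact hbu k
    · funext k
      simp only [Prod.smul_snd, Pi.smul_apply, smul_eq_mul]
      rw [hgamma k, hbu k, _root_.map_mul, Complex.conj_ofReal]
  -- the basic scalar for the all-ones vector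
  obtain ⟨s1, hs10, hs11, hE1⟩ := stepA (fun _ => 1) (fun k => by simp)
  -- Step B : the action on the generators
  have stepB : ∀ j : Fin n, ϑ (Fsys n j) = ((s1:ℂ)) • Fsys n j ∧
      ϑ (Gsys n j) = ((s1:ℂ)) • Gsys n j := by
    intro j
    obtain ⟨s2, _, _, hE2⟩ := stepA (fun k => if k = j then -1 else 1)
      (fun k => by by_cases hk : k = j <;> simp [hk])
    obtain ⟨s3, _, _, hE3⟩ := stepA (fun k => if k = j then I else 1)
      (fun k => by by_cases hk : k = j <;> simp [hk])
    obtain ⟨s4, _, _, hE4⟩ := stepA (fun k => if k = j then -I else 1)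
      (fun k => by by_cases hk : k = j <;> simp [hk])
    -- generic extraction of scalar equations
    have extract : ∀ (t : ℂ) (st : ℝ),
        ϑ (Esys n (fun k => if k = j then t else 1)) = (st:ℂ) • Esys n (fun k => if k = j then t else 1) →
        ∀ (p q : Fin n × Fin 2),
        (s1:ℂ) * ((Esys n (fun _ => 1) : XSys n) : Matrix (Fin n × Fin 2) (Fin n × Fin 2) ℂ) p q
          + (t-1) * ((ϑ (Fsys n j) : XSys n) : Matrix (Fin n × Fin 2) (Fin n × Fin 2) ℂ) p q
          + (conj t - 1) * ((ϑ (Gsys n j) : XSys n) : Matrix (Fin n × Fin 2) (Fin n × Fin 2) ℂ) p q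
        = (st:ℂ) * (((Esys n (fun _ => 1) : XSys n) : Matrix (Fin n × Fin 2) (Fin n × Fin 2) ℂ) p q
          + (t-1) * ((Fsys n j : XSys n) : Matrix (Fin n × Fin 2) (Fin n × Fin 2) ℂ) p q
          + (conj t - 1) * ((Gsys n j : XSys n) : Matrix (Fin n × Fin 2) (Fin n × Fin 2) ℂ) p q) := by
      intro t st h p q
      rw [Esys_decomp j t, map_add, map_add, LinearMap.map_smul, LinearMap.map_smul, hE1] at h
      have h2 := congrArg (fun z : XSys n => ((z : XSys n) : Matrix (Fin n × Fin 2) (Fin n × Fin 2) ℂ) p q) h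
      simp only [Submodule.coe_add, SetLike.val_smul, Matrix.add_apply, Matrix.smul_apply,
        smul_eq_mul] at h2
      linear_combination h2
    -- matrix representations of the images of the generators
    obtain ⟨aF, bF, cF, hFval⟩ := mem_XSys.mp (ϑ (Fsys n j)).2
    obtain ⟨aG, bG, cG, hGval⟩ := mem_XSys.mp (ϑ (Gsys n j)).2
    have hceq : ((Esys n (fun _ => (1:ℂ)) : XSys n) : Matrix (Fin n × Fin 2) (Fin n × Fin 2) ℂ)
        = xMat n 1 (fun _ => 1) (fun _ => 1) := by
      rw [Esys_coe]
      exact xMat_congr rfl (fun _ => rfl) (fun k => by simp)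
    -- the "α-coordinate" equations
    have A2 := extract (-1) s2 hE2 (j0, 0) (j0, 0)
    have A3 := extract I s3 hE3 (j0, 0) (j0, 0)
    have A4 := extract (-I) s4 hE4 (j0, 0) (j0, 0)
    -- the "β_j-coordinate" equations
    have B2 := extract (-1) s2 hE2 (j, 0) (j, 1)
    have B3 := extract I s3 hE3 (j, 0) (j, 1)
    have B4 := extract (-I) s4 hE4 (j, 0) (j, 1)
    rw [hceq, hFval, hGval] at A2 A3 A4 B2 B3 B4
    simp only [Fsys_coe, Gsys_coe, xMat_a, xMat_b, xMat_c, if_pos rfl, reduceIte, Pi.zero_apply, Pi.one_apply, Pi.single_eq_same,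
      map_neg, _root_.map_one, Complex.conj_I, map_neg] at A2 A3 A4 B2 B3 B4
    obtain ⟨hs2e, hs3e, hs4e, haF, haG, hbFj, hbGj⟩ :=
      solve_main s1 s2 s3 s4 aF aG (bF j) (bG j)
        (by linear_combination A2) (by linear_combination A3) (by linear_combination A4)
        (by linear_combination B2) (by linear_combination B3) (by linear_combination B4)
    -- the "γ_j-coordinate" equations
    have C2 := extract (-1) s2 hE2 (j, 1) (j, 0)
    have C3 := extract I s3 hE3 (j, 1) (j, 0)
    rw [hceq, hFval, hGval] at C2 C3
    simp only [Fsys_coe, Gsys_coe, xMat_a, xMat_b, xMat_c, if_pos rfl, reduceIte, Pi.zero_apply, Pi.one_apply, Pi.single_eq_same,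
      map_neg, _root_.map_one, Complex.conj_I] at C2 C3
    rw [hs2e] at C2
    rw [hs3e] at C3
    obtain ⟨hcFj, hcGj⟩ := solve_cc s1 (cF j) (cG j)
      (by linear_combination C2) (by linear_combination C3)
    -- the remaining coordinates, for k ≠ j
    have hrest : ∀ k : Fin n, k ≠ j →
        bF k = 0 ∧ bG k = 0 ∧ cF k = 0 ∧ cG k = 0 := by
      intro k hk
      have D2 := extract (-1) s2 hE2 (k, 0) (k, 1)
      have D3 := extract I s3 hE3 (k, 0) (k, 1)
      have E2 := extract (-1) s2 hE2 (k, 1) (k, 0)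
      have E3 := extract I s3 hE3 (k, 1) (k, 0)
      rw [hceq, hFval, hGval] at D2 D3 E2 E3
      simp only [Fsys_coe, Gsys_coe, xMat_a, xMat_b, xMat_c, if_pos rfl, reduceIte, Pi.zero_apply, Pi.one_apply,
        Pi.single_eq_of_ne hk, map_neg, _root_.map_one, Complex.conj_I] at D2 D3 E2 E3
      rw [hs2e] at D2 E2
      rw [hs3e] at D3 E3
      obtain ⟨h1, h2⟩ := solve_zero (bF k) (bG k)
        (by linear_combination D2) (by linear_combination D3)
      obtain ⟨h3, h4⟩ := solve_zero (cF k) (cG k)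
        (by linear_combination E2) (by linear_combination E3)
      exact ⟨h1, h2, h3, h4⟩
    constructor
    · apply Subtype.ext
      rw [hFval]
      simp only [SetLike.val_smul, Fsys_coe, xMat_smul']
      refine xMat_congr (by rw [haF]; ring) (fun k => ?_) (fun k => ?_)
      · by_cases hk : k = j
        · subst hk; rw [hbFj, Pi.smul_apply, Pi.single_eq_same, smul_eq_mul, mul_one]
        · rw [(hrest k hk).1, Pi.smul_apply, Pi.single_eq_of_ne hk, smul_zero]
      · by_cases hk : k = j
        · subst hk; rw [hcFj]; simp
        · rw [(hrest k hk).2.2.1]; simp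
    · apply Subtype.ext
      rw [hGval]
      simp only [SetLike.val_smul, Gsys_coe, xMat_smul']
      refine xMat_congr (by rw [haG]; ring) (fun k => ?_) (fun k => ?_)
      · by_cases hk : k = j
        · subst hk; rw [hbGj]; simp
        · rw [(hrest k hk).2.1]; simp
      · by_cases hk : k = j
        · subst hk; rw [hcGj, Pi.smul_apply, Pi.single_eq_same, smul_eq_mul, mul_one]
        · rw [(hrest k hk).2.2.2, Pi.smul_apply, Pi.single_eq_of_ne hk, smul_zero]
  -- action on E0
  have hE0 : ϑ (E0sys n) = (s1:ℂ) • E0sys n := by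
    have h1 : E0sys n = Esys n (fun _ => 1) - (∑ k, Fsys n k) - (∑ k, Gsys n k) := by
      rw [Esys_one_decomp]; abel
    rw [h1, map_sub, map_sub, map_sum, map_sum, hE1,
      Finset.sum_congr rfl (fun k _ => (stepB k).1),
      Finset.sum_congr rfl (fun k _ => (stepB k).2),
      ← Finset.smul_sum, ← Finset.smul_sum, smul_sub, smul_sub]
  -- the main identity
  have hmain : ϑ = ((s1:ℝ):ℂ) • (LinearMap.id : XSys n →ₗ[ℂ] XSys n) := by
    apply LinearMap.ext
    intro z
    obtain ⟨α, β, γ, hz⟩ := mem_XSys.mp z.2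
    have hz' : z = ⟨xMat n α β γ, hz ▸ z.2⟩ := Subtype.ext hz
    have hsumF : ϑ (∑ k, β k • Fsys n k) = ∑ k, β k • ((s1:ℂ) • Fsys n k) := by
      rw [map_sum]
      exact Finset.sum_congr rfl (fun k _ => by rw [LinearMap.map_smul, (stepB k).1])
    have hsumG : ϑ (∑ k, γ k • Gsys n k) = ∑ k, γ k • ((s1:ℂ) • Gsys n k) := by
      rw [map_sum]
      exact Finset.sum_congr rfl (fun k _ => by rw [LinearMap.map_smul, (stepB k).2])
    rw [hz', elem_decomp, map_add, map_add, LinearMap.map_smul, hsumF, hsumG, hE0]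
    simp only [LinearMap.smul_apply, LinearMap.id_coe, id_eq]
    rw [smul_add, smul_add, Finset.smul_sum, Finset.smul_sum]
    congr 1
    · congr 1
      · exact smul_comm _ _ _
      · exact Finset.sum_congr rfl (fun k _ => smul_comm _ _ _)
    · exact Finset.sum_congr rfl (fun k _ => smul_comm _ _ _)
  refine ⟨s1, hs10, hs11, hmain, ?_⟩
  have hωeq : ω = LinearMap.id - ϑ := by
    rw [← hsum]; abel
  rw [hωeq, hmain]
  apply LinearMap.ext
  intro z
  simp only [LinearMap.sub_apply, LinearMap.smul_apply, LinearMap.id_coe, id_eq]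
  rw [Complex.ofReal_sub, sub_smul]
  simp
end

section
/- For every n ≥ 2, the identity map id : Y_n → Y_n is pure in the cone CP(Y_n, Y_n) of completely positive linear maps: whenever ϑ, ω : Y_n → Y_n are completely positive linear maps with ϑ + ω = id, there exists s ∈ [0,1] such that ϑ = s·id and ω = (1−s)·id. (This is the content of the theorem that the identity map on the noncommutative-cube operator system NC(n) is pure, transported through the complete order isomorphism NC(n)^d ≅ Y_n.) -/
open scoped ComplexOrder

/-- The block-diagonal matrix `⊕ₖ [[α, βₖ],[βₖ, α]]` in `M_{2n}(ℂ)`. -/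
def yMat (n : ℕ) (α : ℂ) (β : Fin n → ℂ) :
    Matrix (Fin n × Fin 2) (Fin n × Fin 2) ℂ :=
  Matrix.of fun p q => if p.1 = q.1 then !![α, β p.1; β p.1, α] p.2 q.2 else 0

/-- The matrix operator system `Yₙ = { ⊕ₖ [[α, βₖ],[βₖ, α]] } ⊆ M_{2n}(ℂ)`,
completely order isomorphic to the dual of the operator system `NC(n)` of the
noncommutative `n`-cube. -/
noncomputable def YSys (n : ℕ) : Submodule ℂ (Matrix (Fin n × Fin 2) (Fin n × Fin 2) ℂ) :=
  Submodule.span ℂ {x | ∃ α β, x = yMat n α β}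

lemma two_apply (α β : ℂ) (t s : Fin 2) : ![![α, β], ![β, α]] t s = if t = s then α else β := by
  fin_cases t <;> fin_cases s <;> simp

lemma yMat_apply (n : ℕ) (α : ℂ) (β : Fin n → ℂ) (p q : Fin n × Fin 2) :
    yMat n α β p q = if p.1 = q.1 then (if p.2 = q.2 then α else β p.1) else 0 := by
  rw [yMat]; simp only [Matrix.of_apply]
  rw [two_apply]

lemma yMat_add (n : ℕ) (α α' : ℂ) (β β' : Fin n → ℂ) :
    yMat n α β + yMat n α' β' = yMat n (α + α') (β + β') := by
  ext p q
  simp only [Matrix.add_apply, yMat_apply, Pi.add_apply]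
  split_ifs <;> simp

lemma yMat_smul (n : ℕ) (c α : ℂ) (β : Fin n → ℂ) :
    c • yMat n α β = yMat n (c * α) (c • β) := by
  ext p q
  simp only [Matrix.smul_apply, yMat_apply, Pi.smul_apply, smul_eq_mul]
  split_ifs <;> simp

lemma yMat_decomp (n : ℕ) (α : ℂ) (β : Fin n → ℂ) :
    yMat n α β = α • yMat n 1 0 + ∑ k, β k • yMat n 0 (Pi.single k 1) := by
  ext p q
  simp only [Matrix.add_apply, Matrix.smul_apply, Matrix.sum_apply, yMat_apply,
    smul_eq_mul, Pi.zero_apply, Pi.single_apply]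
  split_ifs with h1 h2
  · simp
  · simp only [mul_ite, mul_one, mul_zero]
    rw [Finset.sum_ite_eq]
    simp
  · simp


lemma mem_YSys_iff {n : ℕ} {x : Matrix (Fin n × Fin 2) (Fin n × Fin 2) ℂ} :
    x ∈ YSys n ↔ ∃ α β, x = yMat n α β := by
  constructor
  · intro hx
    induction hx using Submodule.span_induction with
    | mem x hx => exact hx
    | zero => exact ⟨0, 0, by ext p q; simp [yMat_apply]⟩
    | add x y _ _ hx hy =>
      obtain ⟨α, β, rfl⟩ := hx; obtain ⟨α', β', rfl⟩ := hy
      exact ⟨α + α', β + β', yMat_add n α α' β β'⟩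
    | smul c x _ hx =>
      obtain ⟨α, β, rfl⟩ := hx
      exact ⟨c * α, c • β, yMat_smul n c α β⟩
  · rintro ⟨α, β, rfl⟩
    exact Submodule.subset_span ⟨α, β, rfl⟩

open Matrix in
lemma yMat_sign_posSemidef {n : ℕ} (ε : Fin n → ℂ) (hε : ∀ k, ε k = 1 ∨ ε k = -1) :
    (yMat n 1 ε).PosSemidef := by
  set B : Matrix (Fin n × Fin 2) (Fin n × Fin 2) ℂ :=
    Matrix.of fun p q => if p.1 = q.1 ∧ p.2 = 0 then (if q.2 = 0 then 1 else ε q.1) else 0 with hB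
  have key : Bᴴ * B = yMat n 1 ε := by
    ext p q
    rw [Matrix.mul_apply]
    have : ∀ r : Fin n × Fin 2, (Bᴴ) p r * B r q =
        if r = (p.1, 0) then (starRingEnd ℂ) (if p.2 = 0 then 1 else ε p.1) *
          (if r.1 = q.1 then (if q.2 = 0 then 1 else ε q.1) else 0) else 0 := by
      rintro ⟨rk, rt⟩
      simp only [Matrix.conjTranspose_apply, hB, Matrix.of_apply, Prod.mk.injEq]
      by_cases h1 : rk = p.1
      · by_cases h2 : rt = 0 <;> simp [h1, h2]
      · simp [h1, fun h : rk = p.1 ∧ rt = 0 => h1 h.1]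
    rw [Finset.sum_congr rfl (fun r _ => this r), Finset.sum_ite_eq' Finset.univ ((p.1, 0) : Fin n × Fin 2)]
    simp only [Finset.mem_univ, if_true, yMat_apply]
    by_cases hpq : p.1 = q.1
    · simp only [hpq, if_true]
      have hconj : ∀ k, (starRingEnd ℂ) (ε k) = ε k := by
        intro k; rcases hε k with h | h <;> simp [h]
      have hsq : ∀ k, ε k * ε k = 1 := by
        intro k; rcases hε k with h | h <;> rw [h] <;> norm_num
      have h2 : ∀ t : Fin 2, t = 0 ∨ t = 1 := by decide
      rcases h2 p.2 with hp2 | hp2 <;> rcases h2 q.2 with hq2 | hq2 <;>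
        simp [hp2, hq2, hconj, hsq]
    · simp [hpq]
  rw [← key]
  exact Matrix.posSemidef_conjTranspose_mul_self B

open Matrix in
lemma yMat_psd_entry {n : ℕ} {α : ℂ} {β : Fin n → ℂ} (h : (yMat n α β).PosSemidef)
    (j : Fin n) (σ : ℂ) (hσ : σ = 1 ∨ σ = -1) : 0 ≤ α + σ * β j := by
  classical
  set v : Fin n × Fin 2 → ℂ := fun p => if p = (j, 0) then 1 else if p = (j, 1) then σ else 0 with hv
  have h2 := h.dotProduct_mulVec_nonneg v
  have hσc : (starRingEnd ℂ) σ = σ := by rcases hσ with h | h <;> simp [h]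
  have hσσ : σ * σ = 1 := by rcases hσ with h | h <;> rw [h] <;> norm_num
  have hval : star v ⬝ᵥ (yMat n α β) *ᵥ v = 2 * (α + σ * β j) := by
    have hmv : ∀ p, ((yMat n α β) *ᵥ v) p = yMat n α β p (j, 0) + σ * yMat n α β p (j, 1) := by
      intro p
      rw [Matrix.mulVec, dotProduct]
      have : ∀ q : Fin n × Fin 2, yMat n α β p q * v q =
          (if q = (j, 0) then yMat n α β p (j, 0) else 0) +
          (if q = (j, 1) then σ * yMat n α β p (j, 1) else 0) := by
        intro q
        by_cases h1 : q = (j, 0)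
        · simp [hv, h1]
        · by_cases h2 : q = (j, 1) <;> simp [hv, h1, h2, mul_comm]
      rw [Finset.sum_congr rfl (fun q _ => this q), Finset.sum_add_distrib,
        Finset.sum_ite_eq' Finset.univ ((j, 0) : Fin n × Fin 2),
        Finset.sum_ite_eq' Finset.univ ((j, 1) : Fin n × Fin 2)]
      simp
    rw [dotProduct]
    have : ∀ p : Fin n × Fin 2, star v p * ((yMat n α β) *ᵥ v) p =
        (if p = (j, 0) then ((yMat n α β) *ᵥ v) p else 0) +
        (if p = (j, 1) then σ * ((yMat n α β) *ᵥ v) p else 0) := by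
      intro p
      by_cases h1 : p = (j, 0)
      · simp [hv, h1, Pi.star_apply]
      · by_cases h2 : p = (j, 1) <;> simp [hv, h1, h2, Pi.star_apply, hσc]
    rw [Finset.sum_congr rfl (fun p _ => this p), Finset.sum_add_distrib,
      Finset.sum_ite_eq' Finset.univ ((j, 0) : Fin n × Fin 2),
      Finset.sum_ite_eq' Finset.univ ((j, 1) : Fin n × Fin 2)]
    simp only [Finset.mem_univ, if_true, hmv]
    have e00 : yMat n α β (j, 0) (j, 0) = α := by simp [yMat_apply]
    have e01 : yMat n α β (j, 0) (j, 1) = β j := by simp [yMat_apply]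
    have e10 : yMat n α β (j, 1) (j, 0) = β j := by simp [yMat_apply]
    have e11 : yMat n α β (j, 1) (j, 1) = α := by simp [yMat_apply]
    rw [e00, e01, e10, e11]
    have : σ ^ 2 = 1 := by rw [pow_two, hσσ]
    ring_nf
    rw [this]
    ring
  rw [hval] at h2
  have : (0:ℂ) < 2 := by rw [Complex.lt_def]; norm_num
  calc (0:ℂ) = 2⁻¹ * 0 := by ring
  _ ≤ 2⁻¹ * (2 * (α + σ * β j)) := by
      apply mul_le_mul_of_nonneg_left h2
      rw [Complex.le_def]; norm_num
  _ = α + σ * β j := by ring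

lemma isCP_apply_psd {ι κ : Type} [Fintype ι] [Fintype κ]
    {S : Submodule ℂ (Matrix ι ι ℂ)} {T : Submodule ℂ (Matrix κ κ ℂ)}
    {φ : S →ₗ[ℂ] T} (h : IsCP S T φ) {x : S} (hx : Matrix.PosSemidef (x : Matrix ι ι ℂ)) :
    Matrix.PosSemidef (φ x : Matrix κ κ ℂ) := by
  have h1 : (blockMat fun _ _ : Fin 1 => (x : Matrix ι ι ℂ)).PosSemidef :=
    hx.submatrix Prod.snd
  have h2 := h 1 (fun _ _ => x) h1
  exact h2.submatrix (fun i : κ => ((0 : Fin 1), i))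

lemma sign_cancel {n : ℕ} (hn : 2 ≤ n) (u : ℂ) (G : Fin n → ℂ) (j : Fin n)
    (h : ∀ ε : Fin n → ℂ, (∀ i, ε i = 1 ∨ ε i = -1) → ε j = -1 →
      u + ∑ i, ε i * G i = 0) :
    (∀ k, k ≠ j → G k = 0) ∧ u = G j := by
  classical
  set ε0 : Fin n → ℂ := fun i => if i = j then -1 else 1 with hε0
  have hε0s : ∀ i, ε0 i = 1 ∨ ε0 i = -1 := by
    intro i; by_cases hi : i = j <;> simp [hε0, hi]
  have e1 := h ε0 hε0s (by simp [hε0])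
  have hGk : ∀ k, k ≠ j → G k = 0 := by
    intro k hk
    set εk : Fin n → ℂ := fun i => if i = j then -1 else if i = k then -1 else 1 with hεk
    have hεks : ∀ i, εk i = 1 ∨ εk i = -1 := by
      intro i; by_cases h1 : i = j
      · simp [hεk, h1]
      · by_cases h2 : i = k <;> simp [hεk, h1, h2]
    have e2 := h εk hεks (by simp [hεk])
    have hdiff : ∑ i, ε0 i * G i - ∑ i, εk i * G i = 2 * G k := by
      rw [← Finset.sum_sub_distrib]
      have hterm : ∀ i, ε0 i * G i - εk i * G i = if i = k then 2 * G i else 0 := by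
        intro i
        by_cases h2 : i = k
        · subst h2
          simp only [hε0, hεk, if_neg (hk : i ≠ j), if_pos rfl, if_true]
          ring
        · by_cases h1 : i = j <;> simp [hε0, hεk, h1, h2, Ne.symm hk]
      rw [Finset.sum_congr rfl fun i _ => hterm i,
        Finset.sum_ite_eq' Finset.univ k (fun i => 2 * G i)]
      simp
    have : (2:ℂ) * G k = 0 := by linear_combination e1 - e2 - hdiff
    have h2 : (2:ℂ) ≠ 0 := by norm_num
    exact (mul_eq_zero.mp this).resolve_left h2
  refine ⟨hGk, ?_⟩
  have hsum : ∑ i, ε0 i * G i = -G j := by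
    rw [Finset.sum_eq_single j]
    · simp [hε0]
    · intro i _ hij; rw [hGk i hij]; ring
    · intro hj; exact absurd (Finset.mem_univ j) hj
  rw [hsum] at e1
  linear_combination e1

noncomputable def yL (n : ℕ) : (ℂ × (Fin n → ℂ)) →ₗ[ℂ] Matrix (Fin n × Fin 2) (Fin n × Fin 2) ℂ where
  toFun p := yMat n p.1 p.2
  map_add' p q := (yMat_add n p.1 q.1 p.2 q.2).symm
  map_smul' r p := by
    simp only [RingHom.id_apply, Prod.smul_fst, Prod.smul_snd, smul_eq_mul]
    exact (yMat_smul n r p.1 p.2).symm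

/-- The identity map on `Yₙ` is pure in the cone `CP(Yₙ, Yₙ)`, for every `n ≥ 2`. -/
theorem identity_map_on_Yn_is_pure (n : ℕ) (hn : 2 ≤ n)
    (ϑ ω : YSys n →ₗ[ℂ] YSys n)
    (hϑ : IsCP (YSys n) (YSys n) ϑ) (hω : IsCP (YSys n) (YSys n) ω)
    (hsum : ϑ + ω = LinearMap.id) :
    ∃ s : ℝ, 0 ≤ s ∧ s ≤ 1 ∧
      ϑ = (s : ℂ) • (LinearMap.id : YSys n →ₗ[ℂ] YSys n) ∧
      ω = ((1 - s : ℝ) : ℂ) • (LinearMap.id : YSys n →ₗ[ℂ] YSys n) := by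
  classical
  have hsum' : ∀ x : YSys n, ϑ x + ω x = x := by
    intro x
    have := LinearMap.ext_iff.mp hsum x
    simpa using this
  set E : YSys n := ⟨yMat n 1 0, mem_YSys_iff.mpr ⟨1, 0, rfl⟩⟩ with hE
  set H : Fin n → YSys n := fun k => ⟨yMat n 0 (Pi.single k 1), mem_YSys_iff.mpr ⟨0, _, rfl⟩⟩
    with hH
  set F : (Fin n → ℂ) → YSys n := fun ε => ⟨yMat n 1 ε, mem_YSys_iff.mpr ⟨1, ε, rfl⟩⟩ with hF
  obtain ⟨a, c, hac⟩ := mem_YSys_iff.mp (ϑ E).2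
  choose b d hbd using fun k => mem_YSys_iff.mp (ϑ (H k)).2
  -- decomposition of a general element
  have hdecomp : ∀ (α : ℂ) (β : Fin n → ℂ) (x : YSys n), (x : Matrix _ _ ℂ) = yMat n α β →
      x = α • E + ∑ k, β k • H k := by
    intro α β x hx
    apply Subtype.ext
    rw [hx, yMat_decomp n α β]
    simp only [Submodule.coe_add, SetLike.val_smul, AddSubmonoidClass.coe_finset_sum, hE, hH]
  -- value of ϑ on F ε
  have hϑF : ∀ ε : Fin n → ℂ, ((ϑ (F ε) : YSys n) : Matrix _ _ ℂ)
      = yMat n (a + ∑ k, ε k * b k) (fun j => c j + ∑ k, ε k * d k j) := by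
    intro ε
    have hFd : F ε = (1:ℂ) • E + ∑ k, ε k • H k := hdecomp 1 ε (F ε) rfl
    rw [hFd, map_add, map_smul, map_sum, one_smul]
    simp only [map_smul]
    simp only [Submodule.coe_add, AddSubmonoidClass.coe_finset_sum, SetLike.val_smul, hac]
    have hsumy : ∑ k, ε k • ((ϑ (H k) : YSys n) : Matrix _ _ ℂ)
        = yMat n (∑ k, ε k * b k) (fun j => ∑ k, ε k * d k j) := by
      have hterm : ∀ k, ε k • ((ϑ (H k) : YSys n) : Matrix _ _ ℂ) = yL n (ε k • (b k, d k)) := by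
        intro k
        rw [hbd k]
        exact (map_smul (yL n) (ε k) ((b k, d k))).symm
      rw [Finset.sum_congr rfl fun k _ => hterm k, ← map_sum]
      have hfst : (∑ k, ε k • ((b k, d k) : ℂ × (Fin n → ℂ))).1 = ∑ k, ε k * b k := by
        rw [Prod.fst_sum]; rfl
      have hsnd : (∑ k, ε k • ((b k, d k) : ℂ × (Fin n → ℂ))).2 = fun j => ∑ k, ε k * d k j := by
        rw [Prod.snd_sum]
        funext j
        rw [Finset.sum_apply]
        rfl
      show yMat n _ _ = _
      rw [hfst, hsnd]
    rw [hsumy, yMat_add]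
    have hβ : c + (fun j => ∑ k, ε k * d k j) = fun j => c j + ∑ k, ε k * d k j := by
      funext j; simp only [Pi.add_apply]
    rw [hβ]
  -- value of ω on F ε
  have hωF : ∀ ε : Fin n → ℂ, ((ω (F ε) : YSys n) : Matrix _ _ ℂ)
      = yMat n (1 - (a + ∑ k, ε k * b k)) (fun j => ε j - (c j + ∑ k, ε k * d k j)) := by
    intro ε
    have h1 : ω (F ε) = F ε - ϑ (F ε) := by
      have := hsum' (F ε); linear_combination (norm := module) this
    rw [h1]
    have h2 : ((F ε - ϑ (F ε) : YSys n) : Matrix _ _ ℂ)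
        = yMat n 1 ε - yMat n (a + ∑ k, ε k * b k) (fun j => c j + ∑ k, ε k * d k j) := by
      rw [← hϑF ε]; rfl
    rw [h2, sub_eq_iff_eq_add,
      yMat_add n (1 - (a + ∑ k, ε k * b k)) (a + ∑ k, ε k * b k)
        (fun j => ε j - (c j + ∑ k, ε k * d k j)) (fun j => c j + ∑ k, ε k * d k j)]
    have hα : (1 - (a + ∑ k, ε k * b k)) + (a + ∑ k, ε k * b k) = 1 := by ring
    have hβ : (fun j => ε j - (c j + ∑ k, ε k * d k j)) + (fun j => c j + ∑ k, ε k * d k j) = ε := by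
      funext j; simp only [Pi.add_apply]; ring
    rw [hα, hβ]
  -- positivity
  have hposϑ : ∀ ε : Fin n → ℂ, (∀ i, ε i = 1 ∨ ε i = -1) → ∀ (j : Fin n) (σ : ℂ), (σ = 1 ∨ σ = -1) →
      0 ≤ (a + ∑ k, ε k * b k) + σ * (c j + ∑ k, ε k * d k j) := by
    intro ε hε j σ hσ
    have hFpsd : ((F ε : YSys n) : Matrix (Fin n × Fin 2) (Fin n × Fin 2) ℂ).PosSemidef := yMat_sign_posSemidef ε hε
    have := isCP_apply_psd hϑ hFpsd
    rw [hϑF ε] at this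
    exact yMat_psd_entry this j σ hσ
  have hposω : ∀ ε : Fin n → ℂ, (∀ i, ε i = 1 ∨ ε i = -1) → ∀ (j : Fin n) (σ : ℂ), (σ = 1 ∨ σ = -1) →
      0 ≤ (1 - (a + ∑ k, ε k * b k)) + σ * (ε j - (c j + ∑ k, ε k * d k j)) := by
    intro ε hε j σ hσ
    have hFpsd : ((F ε : YSys n) : Matrix (Fin n × Fin 2) (Fin n × Fin 2) ℂ).PosSemidef := yMat_sign_posSemidef ε hε
    have := isCP_apply_psd hω hFpsd
    rw [hωF ε] at this
    exact yMat_psd_entry this j σ hσ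
  -- key cancellation
  have key : ∀ ε : Fin n → ℂ, (∀ i, ε i = 1 ∨ ε i = -1) → ∀ (j : Fin n) (σ : ℂ), (σ = 1 ∨ σ = -1) →
      σ * ε j = -1 →
      (a + ∑ k, ε k * b k) + σ * (c j + ∑ k, ε k * d k j) = 0 := by
    intro ε hε j σ hσ hσε
    have h1 := hposϑ ε hε j σ hσ
    have h2 := hposω ε hε j σ hσ
    have hzero : ((a + ∑ k, ε k * b k) + σ * (c j + ∑ k, ε k * d k j))
        + ((1 - (a + ∑ k, ε k * b k)) + σ * (ε j - (c j + ∑ k, ε k * d k j))) = 0 := by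
      linear_combination hσε
    have hle : (a + ∑ k, ε k * b k) + σ * (c j + ∑ k, ε k * d k j) ≤ 0 := by
      calc (a + ∑ k, ε k * b k) + σ * (c j + ∑ k, ε k * d k j)
          ≤ ((a + ∑ k, ε k * b k) + σ * (c j + ∑ k, ε k * d k j))
            + ((1 - (a + ∑ k, ε k * b k)) + σ * (ε j - (c j + ∑ k, ε k * d k j))) :=
            le_add_of_nonneg_right h2
        _ = 0 := hzero
    exact le_antisymm hle h1
  -- first application of sign_cancel (σ = 1)
  have hA : ∀ j : Fin n, (∀ k, k ≠ j → b k + d k j = 0) ∧ a + c j = b j + d j j := by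
    intro j
    apply sign_cancel hn
    intro ε hεs hεj
    have hk := key ε hεs j 1 (Or.inl rfl) (by rw [hεj]; ring)
    have hsplit : ∑ k, ε k * (b k + d k j) = ∑ k, ε k * b k + ∑ k, ε k * d k j := by
      rw [← Finset.sum_add_distrib]; exact Finset.sum_congr rfl fun k _ => by ring
    linear_combination hk + hsplit
  -- second application (σ = -1)
  have hB : ∀ j : Fin n, (∀ k, k ≠ j → d k j - b k = 0) ∧ a - c j = d j j - b j := by
    intro j
    apply sign_cancel hn
    intro ε hεs hεj
    have hεs' : ∀ i, (-ε) i = 1 ∨ (-ε) i = -1 := by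
      intro i; rcases hεs i with h | h <;> simp [h]
    have hk := key (-ε) hεs' j (-1) (Or.inr rfl) (by simp [hεj])
    simp only [Pi.neg_apply, neg_mul, Finset.sum_neg_distrib] at hk
    have hsplit : ∑ k, ε k * (d k j - b k) = ∑ k, ε k * d k j - ∑ k, ε k * b k := by
      rw [← Finset.sum_sub_distrib]; exact Finset.sum_congr rfl fun k _ => by ring
    linear_combination hk + hsplit
  -- extract coefficients
  have hb0 : ∀ k, b k = 0 := by
    intro k
    set j0 : Fin n := ⟨0, by omega⟩
    set j1 : Fin n := ⟨1, by omega⟩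
    have hne : j0 ≠ j1 := by simp [j0, j1, Fin.ext_iff]
    by_cases hk : k = j0
    · have hkj : k ≠ j1 := by rw [hk]; exact hne
      have e1 := (hA j1).1 k hkj
      have e2 := (hB j1).1 k hkj
      linear_combination (e1 - e2) / 2
    · have e1 := (hA j0).1 k hk
      have e2 := (hB j0).1 k hk
      linear_combination (e1 - e2) / 2
  have hd0 : ∀ k j, k ≠ j → d k j = 0 := by
    intro k j hkj
    have e1 := (hA j).1 k hkj
    have e2 := (hB j).1 k hkj
    linear_combination (e1 + e2) / 2
  have hc0 : ∀ j, c j = 0 := by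
    intro j
    have e1 := (hA j).2
    have e2 := (hB j).2
    linear_combination (e1 - e2) / 2 + hb0 j
  have hdjj : ∀ j, d j j = a := by
    intro j
    have e1 := (hA j).2
    rw [hb0 j, hc0 j] at e1
    linear_combination -e1
  -- positivity of a
  set j0 : Fin n := ⟨0, by omega⟩
  have hsum_d : ∑ k, (1:ℂ) * d k j0 = a := by
    rw [Finset.sum_eq_single j0]
    · rw [one_mul, hdjj]
    · intro k _ hk; rw [one_mul, hd0 k j0 hk]
    · intro hj; exact absurd (Finset.mem_univ j0) hj
  have hsum_b : ∑ k, (1:ℂ) * b k = 0 := by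
    apply Finset.sum_eq_zero; intro k _; rw [hb0 k]; ring
  have hones : ∀ i : Fin n, (fun _ : Fin n => (1:ℂ)) i = 1 ∨ (fun _ : Fin n => (1:ℂ)) i = -1 :=
    fun i => Or.inl rfl
  have ha_nonneg : (0:ℂ) ≤ a + a := by
    have := hposϑ (fun _ => 1) hones j0 1 (Or.inl rfl)
    rw [hsum_b, hsum_d, hc0 j0] at this
    calc (0:ℂ) ≤ (a + 0) + 1 * (0 + a) := this
      _ = a + a := by ring
  have ha_le : (0:ℂ) ≤ (1 - a) + (1 - a) := by
    have := hposω (fun _ => 1) hones j0 1 (Or.inl rfl)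
    rw [hsum_b, hsum_d, hc0 j0] at this
    calc (0:ℂ) ≤ (1 - (a + 0)) + 1 * (1 - (0 + a)) := this
      _ = (1 - a) + (1 - a) := by ring
  -- real coefficient
  have haim : a.im = 0 := by
    have := (Complex.nonneg_iff.mp ha_nonneg).2
    simp only [Complex.add_im] at this
    linarith [this]
  set s : ℝ := a.re with hs
  have hsa : (s : ℂ) = a := Complex.ext rfl (by simp [haim])
  have hs0 : 0 ≤ s := by
    have := (Complex.nonneg_iff.mp ha_nonneg).1
    simp only [Complex.add_re] at this
    have : 0 ≤ a.re + a.re := this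
    linarith [this]
  have hs1 : s ≤ 1 := by
    have := (Complex.nonneg_iff.mp ha_le).1
    simp only [Complex.add_re, Complex.sub_re, Complex.one_re] at this
    linarith [this]
  -- d k = Pi.single k a
  have hdk : ∀ k, d k = Pi.single k a := by
    intro k
    funext j
    rw [Pi.single_apply]
    by_cases hjk : j = k
    · subst hjk; simp [hdjj]
    · rw [if_neg hjk, hd0 k j (fun h => hjk h.symm)]
  -- ϑ on the generators
  have hϑE : ϑ E = a • E := by
    apply Subtype.ext
    rw [SetLike.val_smul, hac]
    show yMat n a c = a • yMat n 1 0
    have hc : c = 0 := funext hc0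
    rw [hc, yMat_smul, mul_one, smul_zero]
  have hϑH : ∀ k, ϑ (H k) = a • H k := by
    intro k
    apply Subtype.ext
    rw [SetLike.val_smul, hbd k, hb0 k, hdk k]
    show yMat n 0 (Pi.single k a) = a • yMat n 0 (Pi.single k 1)
    have hβ : (Pi.single k a : Fin n → ℂ) = a • (Pi.single k 1 : Fin n → ℂ) := by
      funext j; simp [Pi.single_apply, mul_ite]
    rw [hβ, yMat_smul, mul_zero]
  -- main formula
  have hϑx : ∀ x : YSys n, ϑ x = a • x := by
    intro x
    obtain ⟨α, β, hx⟩ := mem_YSys_iff.mp x.2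
    have hxd := hdecomp α β x hx
    rw [hxd, map_add, map_smul, map_sum]
    simp only [map_smul, hϑE, hϑH]
    rw [smul_add, Finset.smul_sum]
    congr 1
    · rw [smul_comm]
    · exact Finset.sum_congr rfl fun k _ => smul_comm _ _ _
  refine ⟨s, hs0, hs1, ?_, ?_⟩
  · apply LinearMap.ext
    intro x
    simp only [LinearMap.smul_apply, LinearMap.id_apply]
    rw [hϑx x, hsa]
  · apply LinearMap.ext
    intro x
    have h1 : ω x = x - ϑ x := by
      have := hsum' x; linear_combination (norm := module) this
    rw [h1, hϑx x]
    have h2 : ((1 - s : ℝ) : ℂ) = 1 - a := by rw [← hsa]; push_cast; ring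
    simp only [LinearMap.smul_apply, LinearMap.id_apply, h2]
    module
end

section
/- Let K and H be complex Hilbert spaces, let R ⊆ T be operator systems on K, and let φ : R → B(H) be a pure completely positive linear map. Let C denote the set of all completely positive linear maps Φ : T → B(H) with Φ(x) = φ(x) for all x ∈ R. Then C is convex, and every extreme point Φ of C is a pure completely positive linear map in CP(T, B(H)). (This is the proposition on extreme points of the set of extensions, in the case where the injective operator system is B(H).) -/
open scoped ComplexOrder InnerProductSpace

/-- An `m × m` matrix of operators on a Hilbert space `H` is positive if the
corresponding operator on the direct sum `H^{⊕m}` is positive, i.e. its quadratic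
form is nonnegative. -/
def OpMatPos {H : Type*} [NormedAddCommGroup H] [InnerProductSpace ℂ H] {m : ℕ}
    (x : Fin m → Fin m → (H →L[ℂ] H)) : Prop :=
  ∀ v : Fin m → H, 0 ≤ ∑ i, ∑ j, ⟪x i j (v j), v i⟫_ℂ

/-- Complete positivity for a linear map from an operator system `R ⊆ B(K)` into `B(H)`. -/
def IsCPop {K H : Type*} [NormedAddCommGroup K] [InnerProductSpace ℂ K]
    [NormedAddCommGroup H] [InnerProductSpace ℂ H]
    (R : Submodule ℂ (K →L[ℂ] K)) (φ : R →ₗ[ℂ] (H →L[ℂ] H)) : Prop :=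
  ∀ (m : ℕ) (x : Fin m → Fin m → R),
    OpMatPos (fun i j => (x i j : K →L[ℂ] K)) →
    OpMatPos (fun i j => φ (x i j))

/-- Purity of a completely positive map `φ : R → B(H)`. -/
def IsPureCPop {K H : Type*} [NormedAddCommGroup K] [InnerProductSpace ℂ K]
    [NormedAddCommGroup H] [InnerProductSpace ℂ H]
    (R : Submodule ℂ (K →L[ℂ] K)) (φ : R →ₗ[ℂ] (H →L[ℂ] H)) : Prop :=
  ∀ ϑ ω : R →ₗ[ℂ] (H →L[ℂ] H), IsCPop R ϑ → IsCPop R ω → ϑ + ω = φ →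
    ∃ s : ℝ, 0 ≤ s ∧ s ≤ 1 ∧ ϑ = (s : ℂ) • φ ∧ ω = ((1 - s : ℝ) : ℂ) • φ


lemma smul_cp_aux {K H : Type*} [NormedAddCommGroup K] [InnerProductSpace ℂ K]
    [NormedAddCommGroup H] [InnerProductSpace ℂ H]
    (T : Submodule ℂ (K →L[ℂ] K)) (c : ℝ) (hc : 0 ≤ c)
    (ψ : T →ₗ[ℂ] (H →L[ℂ] H)) (hψ : IsCPop T ψ) : IsCPop T ((c : ℂ) • ψ) := by
  intro m x hx v
  have h := hψ m x hx v
  simp only [LinearMap.smul_apply, ContinuousLinearMap.coe_smul', Pi.smul_apply,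
    inner_smul_left, Complex.conj_ofReal, ← Finset.mul_sum]
  exact mul_nonneg (Complex.zero_le_real.mpr hc) h

lemma add_cp_aux {K H : Type*} [NormedAddCommGroup K] [InnerProductSpace ℂ K]
    [NormedAddCommGroup H] [InnerProductSpace ℂ H]
    (T : Submodule ℂ (K →L[ℂ] K))
    (ψ₁ ψ₂ : T →ₗ[ℂ] (H →L[ℂ] H)) (h1 : IsCPop T ψ₁) (h2 : IsCPop T ψ₂) :
    IsCPop T (ψ₁ + ψ₂) := by
  intro m x hx v
  simp only [LinearMap.add_apply, ContinuousLinearMap.add_apply, inner_add_left,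
    Finset.sum_add_distrib]
  exact add_nonneg (h1 m x hx v) (h2 m x hx v)

lemma cp_zero_of_one {K H : Type*} [NormedAddCommGroup K] [InnerProductSpace ℂ K] [CompleteSpace K]
    [NormedAddCommGroup H] [InnerProductSpace ℂ H]
    (T : Submodule ℂ (K →L[ℂ] K)) (hT1 : (1 : K →L[ℂ] K) ∈ T)
    (hTstar : ∀ x ∈ T, star x ∈ T)
    (ψ : T →ₗ[ℂ] (H →L[ℂ] H)) (hcp : IsCPop T ψ) (h0 : ψ ⟨1, hT1⟩ = 0) : ψ = 0 := by
  apply LinearMap.ext; intro x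
  set c : ℝ := ‖(x : K →L[ℂ] K)‖ with hc
  have hc0 : 0 ≤ c := norm_nonneg _
  set e : T := ⟨(c : ℂ) • 1, T.smul_mem _ hT1⟩ with he
  set xs : T := ⟨star (x : K →L[ℂ] K), hTstar _ x.2⟩ with hxs
  set X : Fin 2 → Fin 2 → T := ![![e, x], ![xs, e]] with hX
  have hbase : OpMatPos (fun i j => (X i j : K →L[ℂ] K)) := by
    intro v
    have hstar : ⟪(star (x : K →L[ℂ] K)) (v 0), v 1⟫_ℂ = (starRingEnd ℂ) ⟪(x : K →L[ℂ] K) (v 1), v 0⟫_ℂ := by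
      rw [ContinuousLinearMap.star_eq_adjoint, ContinuousLinearMap.adjoint_inner_left,
        ← inner_conj_symm]
    have habs : |(⟪(x : K →L[ℂ] K) (v 1), v 0⟫_ℂ).re| ≤ c * ‖v 1‖ * ‖v 0‖ := by
      calc |(⟪(x : K →L[ℂ] K) (v 1), v 0⟫_ℂ).re| ≤ ‖⟪(x : K →L[ℂ] K) (v 1), v 0⟫_ℂ‖ :=
            Complex.abs_re_le_norm _
        _ ≤ ‖(x : K →L[ℂ] K) (v 1)‖ * ‖v 0‖ := norm_inner_le_norm _ _
        _ ≤ (c * ‖v 1‖) * ‖v 0‖ := by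
            gcongr; exact (x : K →L[ℂ] K).le_opNorm _
        _ = c * ‖v 1‖ * ‖v 0‖ := by ring
    have hself : ∀ w : K, ⟪w, w⟫_ℂ = ((‖w‖^2 : ℝ) : ℂ) := fun w => by
      rw [inner_self_eq_norm_sq_to_K]; norm_cast
    have hkey : ∑ i, ∑ j, ⟪(X i j : K →L[ℂ] K) (v j), v i⟫_ℂ
        = ((c * ‖v 0‖^2 + c * ‖v 1‖^2 + 2 * (⟪(x : K →L[ℂ] K) (v 1), v 0⟫_ℂ).re : ℝ) : ℂ) := by
      simp only [hX, Fin.sum_univ_two, Matrix.cons_val', Matrix.cons_val_zero,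
        Matrix.cons_val_one, Matrix.head_cons, Matrix.head_fin_const, Matrix.cons_val_fin_one,
        ContinuousLinearMap.smul_apply, ContinuousLinearMap.one_apply,
        inner_smul_left, Complex.conj_ofReal, hself, hstar, he, hxs]
      have hz := Complex.add_conj ⟪(x : K →L[ℂ] K) (v 1), v 0⟫_ℂ
      push_cast at hz ⊢
      linear_combination hz
    rw [hkey, Complex.zero_le_real]
    nlinarith [mul_nonneg hc0 (sq_nonneg (‖v 0‖ - ‖v 1‖)), (abs_le.mp habs).1]
  have himg := hcp 2 X hbase
  have he0 : ψ e = 0 := by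
    have h : e = (c : ℂ) • (⟨1, hT1⟩ : T) := rfl
    rw [h, map_smul, h0, smul_zero]
  have key : ∀ v0 v1 : H, 0 ≤ ⟪(ψ x) v1, v0⟫_ℂ + ⟪(ψ xs) v0, v1⟫_ℂ := by
    intro v0 v1
    have := himg ![v0, v1]
    simpa [hX, Fin.sum_univ_two, he0] using this
  have key2 : ∀ (v0 v1 : H) (lam : ℂ),
      0 ≤ (starRingEnd ℂ) lam * ⟪(ψ x) v1, v0⟫_ℂ + lam * ⟪(ψ xs) v0, v1⟫_ℂ := by
    intro v0 v1 lam
    have := key v0 (lam • v1)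
    simpa [inner_smul_left, inner_smul_right, map_smul, mul_comm] using this
  have hzero : ∀ v0 v1 : H, ⟪(ψ x) v1, v0⟫_ℂ = 0 := by
    intro v0 v1
    set a := ⟪(ψ x) v1, v0⟫_ℂ with ha
    set b := ⟪(ψ xs) v0, v1⟫_ℂ with hb
    have h1 : 0 ≤ a + b := by simpa using key2 v0 v1 1
    have hab : a + b = 0 := by
      have h2 := key2 v0 v1 (-1)
      have h2' : 0 ≤ -(a + b) := by convert h2 using 1; rw [map_neg, map_one]; ring
      exact le_antisymm (neg_nonneg.mp h2') h1
    have hba : b = a := by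
      have h3 := key2 v0 v1 Complex.I
      have h4 := key2 v0 v1 (-Complex.I)
      rw [Complex.conj_I] at h3
      rw [map_neg, Complex.conj_I] at h4
      have h5 : 0 ≤ Complex.I * (b - a) := by convert h3 using 1; ring
      have h6 : 0 ≤ -(Complex.I * (b - a)) := by convert h4 using 1; ring
      have h7 : Complex.I * (b - a) = 0 := le_antisymm (neg_nonneg.mp h6) h5
      rcases mul_eq_zero.mp h7 with h | h
      · exact absurd h Complex.I_ne_zero
      · exact sub_eq_zero.mp h
    rw [hba] at hab
    exact add_self_eq_zero.mp hab
  show ψ x = 0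
  ext v
  exact inner_self_eq_zero.mp (hzero ((ψ x) v) v)


/-- Let `C` be the set of completely positive extensions to `T` of a pure completely
positive map `φ : R → B(H)`.  Then `C` is convex, and every extreme point of `C` is a
pure completely positive map in `CP(T, B(H))`. -/
theorem extreme_points_of_extension_set_are_pure
    {K H : Type*} [NormedAddCommGroup K] [InnerProductSpace ℂ K] [CompleteSpace K]
    [NormedAddCommGroup H] [InnerProductSpace ℂ H] [CompleteSpace H]
    (R T : Submodule ℂ (K →L[ℂ] K)) (hRT : R ≤ T)
    (hR1 : (1 : K →L[ℂ] K) ∈ R) (hRstar : ∀ x ∈ R, star x ∈ R)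
    (hT1 : (1 : K →L[ℂ] K) ∈ T) (hTstar : ∀ x ∈ T, star x ∈ T)
    (φ : R →ₗ[ℂ] (H →L[ℂ] H)) (hφcp : IsCPop R φ) (hφpure : IsPureCPop R φ)
    (C : Set (T →ₗ[ℂ] (H →L[ℂ] H)))
    (hC : ∀ Φ, Φ ∈ C ↔ (IsCPop T Φ ∧
      ∀ (x : K →L[ℂ] K) (hx : x ∈ R), Φ ⟨x, hRT hx⟩ = φ ⟨x, hx⟩)) :
    (∀ Φ₁ ∈ C, ∀ Φ₂ ∈ C, ∀ t : ℝ, 0 ≤ t → t ≤ 1 →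
        (t : ℂ) • Φ₁ + ((1 - t : ℝ) : ℂ) • Φ₂ ∈ C) ∧
    (∀ Φ ∈ C, (∀ Φ₁ ∈ C, ∀ Φ₂ ∈ C, ∀ t : ℝ, 0 < t → t < 1 →
        Φ = (t : ℂ) • Φ₁ + ((1 - t : ℝ) : ℂ) • Φ₂ → Φ₁ = Φ ∧ Φ₂ = Φ) →
      IsPureCPop T Φ) := by
  constructor
  · -- convexity
    intro Φ₁ h1 Φ₂ h2 t ht0 ht1
    rw [hC] at h1 h2 ⊢
    refine ⟨add_cp_aux T _ _ (smul_cp_aux T t ht0 Φ₁ h1.1)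
      (smul_cp_aux T (1 - t) (by linarith) Φ₂ h2.1), ?_⟩
    intro x hx
    simp only [LinearMap.add_apply, LinearMap.smul_apply, h1.2 x hx, h2.2 x hx]
    rw [← add_smul]
    norm_num
  · -- extreme points are pure
    intro Φ hΦ hext ϑ ω hϑ hω hsum
    have hΦC := (hC Φ).1 hΦ
    set ι : R →ₗ[ℂ] T := Submodule.inclusion hRT with hι
    have hcomp_cp : ∀ ψ : T →ₗ[ℂ] (H →L[ℂ] H), IsCPop T ψ → IsCPop R (ψ ∘ₗ ι) := by
      intro ψ hψ m x hx
      exact hψ m (fun i j => ι (x i j)) hx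
    have hsum' : (ϑ ∘ₗ ι) + (ω ∘ₗ ι) = φ := by
      apply LinearMap.ext; intro x
      have h := congrArg (fun f : T →ₗ[ℂ] (H →L[ℂ] H) => f (ι x)) hsum
      simp only [LinearMap.add_apply] at h
      simp only [LinearMap.add_apply, LinearMap.comp_apply]
      rw [h]
      exact hΦC.2 x.1 x.2
    obtain ⟨s, hs0, hs1, hϑeq, hωeq⟩ :=
      hφpure (ϑ ∘ₗ ι) (ω ∘ₗ ι) (hcomp_cp ϑ hϑ) (hcomp_cp ω hω) hsum'
    have hone : (⟨1, hRT hR1⟩ : T) = ⟨1, hT1⟩ := rfl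
    rcases eq_or_lt_of_le hs0 with h0 | h0
    · -- s = 0 : ϑ vanishes on R, hence ϑ = 0
      have hϑ1 : ϑ ⟨1, hT1⟩ = 0 := by
        have := congrArg (fun f : R →ₗ[ℂ] (H →L[ℂ] H) => f ⟨1, hR1⟩) hϑeq
        simp only [LinearMap.comp_apply, LinearMap.smul_apply, ← h0] at this
        simpa [hι, hone, Submodule.inclusion_apply] using this
      have hϑ0 : ϑ = 0 := cp_zero_of_one T hT1 hTstar ϑ hϑ hϑ1
      refine ⟨0, le_refl 0, zero_le_one, by simp [hϑ0], ?_⟩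
      rw [← hsum, hϑ0]
      norm_num
    rcases eq_or_lt_of_le hs1 with h1 | h1
    · -- s = 1 : ω vanishes on R, hence ω = 0
      have hω1 : ω ⟨1, hT1⟩ = 0 := by
        have := congrArg (fun f : R →ₗ[ℂ] (H →L[ℂ] H) => f ⟨1, hR1⟩) hωeq
        simp only [LinearMap.comp_apply, LinearMap.smul_apply, h1] at this
        simpa [hι, hone, Submodule.inclusion_apply] using this
      have hω0 : ω = 0 := cp_zero_of_one T hT1 hTstar ω hω hω1
      refine ⟨1, zero_le_one, le_refl 1, ?_, by simp [hω0]⟩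
      rw [← hsum, hω0]
      norm_num
    · -- 0 < s < 1
      have hsne : (s : ℂ) ≠ 0 := by exact_mod_cast ne_of_gt (show (0:ℝ) < s from h0)
      have hsne' : ((1 - s : ℝ) : ℂ) ≠ 0 := by
        exact_mod_cast ne_of_gt (show (0:ℝ) < 1 - s by linarith)
      set Φ₁ : T →ₗ[ℂ] (H →L[ℂ] H) := ((s⁻¹ : ℝ) : ℂ) • ϑ with hΦ₁
      set Φ₂ : T →ₗ[ℂ] (H →L[ℂ] H) := (((1 - s)⁻¹ : ℝ) : ℂ) • ω with hΦ₂
      have hΦ₁C : Φ₁ ∈ C := by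
        rw [hC]
        refine ⟨smul_cp_aux T s⁻¹ (by positivity) ϑ hϑ, ?_⟩
        intro x hx
        have hϑx : ϑ ⟨x, hRT hx⟩ = (s : ℂ) • φ ⟨x, hx⟩ := by
          have := congrArg (fun f : R →ₗ[ℂ] (H →L[ℂ] H) => f ⟨x, hx⟩) hϑeq
          simpa [hι, Submodule.inclusion_apply] using this
        rw [hΦ₁, LinearMap.smul_apply, hϑx, smul_smul]
        rw [show ((s⁻¹ : ℝ) : ℂ) * (s : ℂ) = 1 by
          push_cast; field_simp]
        rw [one_smul]
      have hΦ₂C : Φ₂ ∈ C := by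
        rw [hC]
        refine ⟨smul_cp_aux T (1 - s)⁻¹ (le_of_lt (inv_pos.mpr (by linarith))) ω hω, ?_⟩
        intro x hx
        have hωx : ω ⟨x, hRT hx⟩ = ((1 - s : ℝ) : ℂ) • φ ⟨x, hx⟩ := by
          have := congrArg (fun f : R →ₗ[ℂ] (H →L[ℂ] H) => f ⟨x, hx⟩) hωeq
          simpa [hι, Submodule.inclusion_apply] using this
        rw [hΦ₂, LinearMap.smul_apply, hωx, smul_smul]
        rw [show (((1 - s)⁻¹ : ℝ) : ℂ) * ((1 - s : ℝ) : ℂ) = 1 by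
          rw [← Complex.ofReal_mul, inv_mul_cancel₀ (by linarith : (1:ℝ) - s ≠ 0)]; norm_num]
        rw [one_smul]
      have hconv : Φ = (s : ℂ) • Φ₁ + ((1 - s : ℝ) : ℂ) • Φ₂ := by
        rw [hΦ₁, hΦ₂, smul_smul, smul_smul]
        rw [show (s : ℂ) * ((s⁻¹ : ℝ) : ℂ) = 1 by push_cast; field_simp]
        rw [show ((1 - s : ℝ) : ℂ) * (((1 - s)⁻¹ : ℝ) : ℂ) = 1 by
          rw [← Complex.ofReal_mul, mul_inv_cancel₀ (by linarith : (1:ℝ) - s ≠ 0)]; norm_num]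
        rw [one_smul, one_smul, hsum]
      obtain ⟨hΦ₁eq, hΦ₂eq⟩ := hext Φ₁ hΦ₁C Φ₂ hΦ₂C s h0 h1 hconv
      refine ⟨s, hs0, hs1, ?_, ?_⟩
      · rw [← hΦ₁eq, hΦ₁, smul_smul]
        rw [show (s : ℂ) * ((s⁻¹ : ℝ) : ℂ) = 1 by push_cast; field_simp]
        rw [one_smul]
      · rw [← hΦ₂eq, hΦ₂, smul_smul]
        rw [show ((1 - s : ℝ) : ℂ) * (((1 - s)⁻¹ : ℝ) : ℂ) = 1 by
          rw [← Complex.ofReal_mul, mul_inv_cancel₀ (by linarith : (1:ℝ) - s ≠ 0)]; norm_num]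
        rw [one_smul]
end

section
/- Fix n ≥ 1 and k ∈ {1, …, 2n}. If Φ : ℂ^{2n} → ℂ is a linear functional that is positive (Φ(x) ≥ 0 whenever every coordinate of x is a nonnegative real), unital (Φ(1,…,1) = 1), and satisfies Φ(z) = z_k (the k-th coordinate of z) for every z ∈ Z_n, then Φ(x) = x_k for every x ∈ ℂ^{2n}. In other words, the k-th coordinate projection π_k : ℂ^{2n} → ℂ is the unique state extension of its restriction to Z_n, so each π_k is a boundary representation of ℓ^∞(2n) for Z_n. -/
open scoped ComplexOrder

/-- The vector `(α+β₁, α−β₁, …, α+βₙ, α−βₙ) ∈ ℂ^{2n}`, with coordinates indexed by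
`Fin n × Fin 2` (the pair `(k, 0)` is the coordinate `α+βₖ` and `(k, 1)` is `α−βₖ`). -/
def zVec (n : ℕ) (α : ℂ) (β : Fin n → ℂ) : Fin n × Fin 2 → ℂ :=
  fun p => if p.2 = 0 then α + β p.1 else α - β p.1

/-- The operator system `Zₙ = { (α+β₁, α−β₁, …, α+βₙ, α−βₙ) } ⊆ ℓ^∞(2n) = ℂ^{2n}`. -/
noncomputable def ZSys (n : ℕ) : Submodule ℂ (Fin n × Fin 2 → ℂ) :=
  Submodule.span ℂ {x | ∃ α β, x = zVec n α β}

/-- Each coordinate projection `π_k : ℓ^∞(2n) → ℂ` is the unique state extension of its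
restriction to `Zₙ`; that is, every positive unital linear functional on `ℂ^{2n}` that
agrees with the `k`-th coordinate on `Zₙ` is the `k`-th coordinate projection.  Hence
each `π_k` is a boundary representation of `ℓ^∞(2n)` for `Zₙ`. -/
theorem coordinate_projection_unique_state_extension (n : ℕ) (hn : 1 ≤ n)
    (k : Fin n × Fin 2) (Φ : (Fin n × Fin 2 → ℂ) →ₗ[ℂ] ℂ)
    (hpos : ∀ x : Fin n × Fin 2 → ℂ, (∀ i, 0 ≤ x i) → 0 ≤ Φ x)
    (hunital : Φ (fun _ => 1) = 1)
    (hext : ∀ z ∈ ZSys n, Φ z = z k) :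
    ∀ x : Fin n × Fin 2 → ℂ, Φ x = x k := by
  classical
  set c : Fin n × Fin 2 → ℂ := fun i => Φ (fun j => if i = j then 1 else 0) with hc
  have hrep : ∀ x, Φ x = ∑ i, x i * c i := by
    intro x
    rw [LinearMap.pi_apply_eq_sum_univ]
    simp [hc, smul_eq_mul]
  have hnn : ∀ i, 0 ≤ c i := by
    intro i
    apply hpos
    intro j
    split <;> norm_num
  have hsum : (∑ i, c i) = 1 := by
    have := hrep (fun _ => 1)
    rw [hunital] at this
    simpa using this.symm
  have hdiff : c (k.1, 0) - c (k.1, 1) = (if k.2 = 0 then (1:ℂ) else -1) := by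
    have hz : zVec n 0 (Pi.single k.1 1) ∈ ZSys n :=
      Submodule.subset_span ⟨0, Pi.single k.1 1, rfl⟩
    have h := hext _ hz
    have h1 : Φ (zVec n 0 (Pi.single k.1 1)) = c (k.1, 0) - c (k.1, 1) := by
      have heq : zVec n 0 (Pi.single k.1 1) =
          (fun j => if ((k.1, (0 : Fin 2)) : Fin n × Fin 2) = j then 1 else 0)
          - (fun j => if ((k.1, (1 : Fin 2)) : Fin n × Fin 2) = j then 1 else 0) := by
        funext p
        rcases p with ⟨a, b⟩
        rcases eq_or_ne a k.1 with h | h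
        · subst h
          fin_cases b <;> simp [zVec, Pi.single_apply, Prod.ext_iff]
        · fin_cases b <;>
            simp [zVec, Pi.single_apply, Prod.ext_iff, h, h.symm, Ne.symm h]
      rw [heq, map_sub]
    rw [h1] at h
    rw [h]
    simp [zVec, Pi.single_apply]
  have hk1 : (1 : ℂ) ≤ c k := by
    obtain ⟨a, b⟩ := k
    have hb : b = 0 ∨ b = 1 := by omega
    rcases hb with hb | hb <;> subst hb
    · simp only [reduceIte] at hdiff
      have h2 : c (a, 0) = 1 + c (a, 1) := by linear_combination hdiff
      rw [h2]
      exact le_add_of_nonneg_right (hnn (a, 1))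
    · norm_num at hdiff
      have h2 : c (a, 1) = 1 + c (a, 0) := by linear_combination -hdiff
      rw [h2]
      exact le_add_of_nonneg_right (hnn (a, 0))
  have hsplit : c k + ∑ i ∈ Finset.univ.erase k, c i = 1 := by
    rw [Finset.add_sum_erase _ _ (Finset.mem_univ k)]
    exact hsum
  have herase0 : (∑ i ∈ Finset.univ.erase k, c i) = 0 := by
    apply le_antisymm
    · have : (∑ i ∈ Finset.univ.erase k, c i) = 1 - c k := by
        linear_combination hsplit
      rw [this]
      exact sub_nonpos.mpr hk1
    · exact Finset.sum_nonneg fun i _ => hnn i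
  have hzero : ∀ i, i ≠ k → c i = 0 := by
    intro i hi
    have := (Finset.sum_eq_zero_iff_of_nonneg (fun j _ => hnn j)).mp herase0 i
      (Finset.mem_erase.mpr ⟨hi, Finset.mem_univ i⟩)
    exact this
  have hck : c k = 1 := by
    have h2 := hsplit
    rw [herase0, add_zero] at h2
    exact h2
  intro x
  rw [hrep x]
  rw [Finset.sum_eq_single k]
  · rw [hck, mul_one]
  · intro i _ hi
    rw [hzero i hi, mul_zero]
  · intro h
    exact absurd (Finset.mem_univ k) h
end

section
/- Fix n ≥ 1 and k ∈ {1, …, 2n}. The linear functional φ_k : Z_n → ℂ given by φ_k(z) = z_k (the k-th coordinate) is a pure state on Z_n: φ_k is unital and positive, and whenever ϑ, ω : Z_n → ℂ are positive linear functionals (meaning ϑ(z) ≥ 0 and ω(z) ≥ 0 for every z ∈ Z_n all of whose coordinates are nonnegative reals) with ϑ + ω = φ_k, there exists s ∈ [0,1] such that ϑ = s·φ_k and ω = (1−s)·φ_k. -/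
open scoped ComplexOrder

theorem one_mem_ZSys (n : ℕ) : (fun _ => (1 : ℂ)) ∈ ZSys n :=
  Submodule.subset_span ⟨1, 0, by funext p; simp [zVec]⟩

/-- The `k`-th coordinate functional on `Zₙ`. -/
noncomputable def coordState (n : ℕ) (k : Fin n × Fin 2) : ZSys n →ₗ[ℂ] ℂ :=
  (LinearMap.proj k : (Fin n × Fin 2 → ℂ) →ₗ[ℂ] ℂ).comp (ZSys n).subtype

/-- A linear functional on `Zₙ` is positive if it is nonnegative on every element of
`Zₙ` all of whose coordinates are nonnegative reals. -/
def IsPosFunctional {n : ℕ} (ϑ : ZSys n →ₗ[ℂ] ℂ) : Prop :=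
  ∀ z : ZSys n, (∀ i, 0 ≤ (z : Fin n × Fin 2 → ℂ) i) → 0 ≤ ϑ z

-- auxiliary

lemma zVec_mem (n : ℕ) (α : ℂ) (β : Fin n → ℂ) : zVec n α β ∈ ZSys n :=
  Submodule.subset_span ⟨α, β, rfl⟩

noncomputable def Lmap (n : ℕ) : (ℂ × (Fin n → ℂ)) →ₗ[ℂ] (Fin n × Fin 2 → ℂ) where
  toFun p := zVec n p.1 p.2
  map_add' p q := by funext x; by_cases h : x.2 = 0 <;> simp [zVec, h] <;> ring
  map_smul' c p := by funext x; by_cases h : x.2 = 0 <;> simp [zVec, h] <;> ring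

lemma mem_ZSys {n : ℕ} {x : Fin n × Fin 2 → ℂ} (hx : x ∈ ZSys n) :
    ∃ α β, x = zVec n α β := by
  have h : ZSys n ≤ LinearMap.range (Lmap n) := by
    apply Submodule.span_le.mpr
    rintro y ⟨α, β, rfl⟩
    exact ⟨(α, β), rfl⟩
  obtain ⟨⟨α, β⟩, h2⟩ := h hx
  exact ⟨α, β, h2.symm⟩

noncomputable def T0 {n : ℕ} (ϑ : ZSys n →ₗ[ℂ] ℂ) : ℂ :=
  ϑ ⟨zVec n 1 0, zVec_mem n 1 0⟩

noncomputable def Tj {n : ℕ} (ϑ : ZSys n →ₗ[ℂ] ℂ) (j : Fin n) : ℂ :=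
  ϑ ⟨zVec n 0 (Pi.single j 1), zVec_mem n 0 _⟩

lemma apply_zv {n : ℕ} (ϑ : ZSys n →ₗ[ℂ] ℂ) (α : ℂ) (β : Fin n → ℂ) :
    ϑ ⟨zVec n α β, zVec_mem n α β⟩ = α * T0 ϑ + ∑ j, β j * Tj ϑ j := by
  have key : (⟨zVec n α β, zVec_mem n α β⟩ : ZSys n)
      = α • (⟨zVec n 1 0, zVec_mem n 1 0⟩ : ZSys n)
        + ∑ j, β j • (⟨zVec n 0 (Pi.single j 1), zVec_mem n 0 _⟩ : ZSys n) := by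
    apply Subtype.ext
    push_cast [Submodule.coe_sum]
    funext p
    by_cases h : p.2 = 0 <;>
      simp [zVec, h, Finset.sum_apply, Pi.single_apply, mul_ite, Finset.sum_ite_eq',
        Finset.sum_neg_distrib, sub_eq_add_neg]
  rw [key, map_add, map_smul, map_sum]
  simp only [smul_eq_mul, T0, Tj]
  congr 1
  refine Finset.sum_congr rfl fun j _ => ?_
  rw [map_smul, smul_eq_mul]

lemma pos_test {n : ℕ} {ϑ : ZSys n →ₗ[ℂ] ℂ} (h : IsPosFunctional ϑ)
    (ε : Fin n → ℝ) (hε : ∀ j, |ε j| ≤ 1) :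
    0 ≤ T0 ϑ + ∑ j, (ε j : ℂ) * Tj ϑ j := by
  have hpos : ∀ i, 0 ≤ (zVec n 1 (fun j => (ε j : ℂ))) i := by
    intro i
    rcases abs_le.mp (hε i.1) with ⟨h1, h2⟩
    by_cases hi : i.2 = 0
    · simp only [zVec, hi, if_pos]
      have : (1 : ℂ) + (ε i.1 : ℂ) = ((1 + ε i.1 : ℝ) : ℂ) := by push_cast; ring
      rw [this, Complex.zero_le_real]
      linarith
    · simp only [zVec, hi, if_neg, not_false_iff]
      have : (1 : ℂ) - (ε i.1 : ℂ) = ((1 - ε i.1 : ℝ) : ℂ) := by push_cast; ring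
      rw [this, Complex.zero_le_real]
      linarith
  have := h ⟨zVec n 1 (fun j => (ε j : ℂ)), zVec_mem n 1 _⟩ hpos
  rwa [apply_zv, one_mul] at this

lemma t0_nonneg {n : ℕ} {ϑ : ZSys n →ₗ[ℂ] ℂ} (h : IsPosFunctional ϑ) :
    0 ≤ T0 ϑ := by
  have := pos_test h 0 (fun j => by simp)
  simpa using this

lemma tj_sum_single {n : ℕ} (ϑ : ZSys n →ₗ[ℂ] ℂ) (j : Fin n) (c : ℝ) :
    ∑ j', (((Pi.single j c : Fin n → ℝ) j' : ℂ)) * Tj ϑ j' = (c : ℂ) * Tj ϑ j := by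
  rw [Finset.sum_eq_single j]
  · simp
  · intro b _ hb; simp [Pi.single_apply, hb]
  · simp

lemma tj_im {n : ℕ} {ϑ : ZSys n →ₗ[ℂ] ℂ} (h : IsPosFunctional ϑ) (j : Fin n) :
    (Tj ϑ j).im = 0 := by
  have h0 := t0_nonneg h
  have h1 := pos_test h (Pi.single j 1) (fun j' => by
    simp [Pi.single_apply]; split <;> norm_num)
  rw [tj_sum_single ϑ j 1] at h1
  have h0' := (Complex.nonneg_iff.mp h0).2
  have h1' := (Complex.nonneg_iff.mp h1).2
  simp only [Complex.add_im, one_mul, Complex.ofReal_one] at h1'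
  linarith

lemma sum_abs_le {n : ℕ} {ϑ : ZSys n →ₗ[ℂ] ℂ} (h : IsPosFunctional ϑ) :
    ∑ j, |(Tj ϑ j).re| ≤ (T0 ϑ).re := by
  set ε : Fin n → ℝ := fun j => if 0 ≤ (Tj ϑ j).re then -1 else 1 with hεdef
  have h1 := pos_test h ε (fun j => by simp [hεdef]; split <;> norm_num)
  have h2 := (Complex.nonneg_iff.mp h1).1
  rw [Complex.add_re, Complex.re_sum] at h2
  have h3 : ∀ j, ((ε j : ℂ) * Tj ϑ j).re = -|(Tj ϑ j).re| := by
    intro j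
    rw [Complex.re_ofReal_mul]
    by_cases hj : 0 ≤ (Tj ϑ j).re
    · simp [hεdef, hj, abs_of_nonneg hj]
    · simp [hεdef, hj, abs_of_neg (lt_of_not_ge hj)]
  rw [Finset.sum_congr rfl (fun j _ => h3 j)] at h2
  rw [Finset.sum_neg_distrib] at h2
  linarith

lemma eq_smul_coord {n : ℕ} (k : Fin n × Fin 2) (ϑ : ZSys n →ₗ[ℂ] ℂ) (s : ℝ)
    (h0 : T0 ϑ = (s : ℂ))
    (hj : ∀ j, Tj ϑ j = if j = k.1 then (if k.2 = 0 then (s : ℂ) else -(s : ℂ)) else 0) :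
    ϑ = (s : ℂ) • coordState n k := by
  apply LinearMap.ext; intro z
  obtain ⟨α, β, hz⟩ := mem_ZSys z.2
  have hz' : z = ⟨zVec n α β, zVec_mem n α β⟩ := Subtype.ext hz
  rw [hz', apply_zv, h0]
  have hsumj : ∑ j, β j * Tj ϑ j
      = β k.1 * (if k.2 = 0 then (s : ℂ) else -(s : ℂ)) := by
    rw [Finset.sum_congr rfl (fun j _ => by rw [hj j])]
    simp [mul_ite, Finset.sum_ite_eq']
  rw [hsumj]
  have hr : ((s : ℂ) • coordState n k) (⟨zVec n α β, zVec_mem n α β⟩ : ZSys n)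
      = (s : ℂ) * (if k.2 = 0 then α + β k.1 else α - β k.1) := by
    simp only [LinearMap.smul_apply, coordState, LinearMap.coe_comp, Function.comp_apply,
      Submodule.coe_subtype, LinearMap.proj_apply, smul_eq_mul, zVec]
  rw [hr]
  by_cases h2 : k.2 = 0 <;> simp only [h2, if_true, if_false, reduceIte] <;> ring


/-- Each coordinate functional `φ_k(z) = z_k` is a pure state on `Zₙ`: it is unital and
positive, and any decomposition of it as a sum of two positive linear functionals
consists of scalar multiples of `φ_k`. -/
theorem coordinate_functional_is_pure_state (n : ℕ) (hn : 1 ≤ n) (k : Fin n × Fin 2) :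
    coordState n k ⟨fun _ => 1, one_mem_ZSys n⟩ = 1 ∧
    IsPosFunctional (coordState n k) ∧
    ∀ ϑ ω : ZSys n →ₗ[ℂ] ℂ, IsPosFunctional ϑ → IsPosFunctional ω →
      ϑ + ω = coordState n k →
      ∃ s : ℝ, 0 ≤ s ∧ s ≤ 1 ∧
        ϑ = (s : ℂ) • coordState n k ∧ ω = ((1 - s : ℝ) : ℂ) • coordState n k := by
  refine ⟨rfl, fun z h => h k, ?_⟩
  intro ϑ ω hϑ hω hsum
  set σ : ℝ := if k.2 = 0 then 1 else -1 with hσdef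
  have hσ1 : |σ| = 1 := by rw [hσdef]; split <;> norm_num
  have hσσ : σ * σ = 1 := by rw [hσdef]; split <;> norm_num
  -- values of the coordinate functional
  have hφ0 : T0 (coordState n k) = 1 := by
    by_cases h2 : k.2 = 0 <;> simp [T0, coordState, zVec, h2]
  have hφj : ∀ j, Tj (coordState n k) j = if j = k.1 then (σ : ℂ) else 0 := by
    intro j
    by_cases h2 : k.2 = 0 <;> by_cases h1 : j = k.1 <;>
      simp [Tj, coordState, zVec, h2, h1, Pi.single_apply, hσdef] <;>
      simp [eq_comm, h1]
  -- real data
  set a0 : ℝ := (T0 ϑ).re with ha0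
  set b0 : ℝ := (T0 ω).re with hb0
  set a : Fin n → ℝ := fun j => (Tj ϑ j).re with ha
  set b : Fin n → ℝ := fun j => (Tj ω j).re with hb
  have hϑ0 : T0 ϑ = (a0 : ℂ) := by
    apply Complex.ext <;> simp [ha0, ← (Complex.nonneg_iff.mp (t0_nonneg hϑ)).2]
  have hω0 : T0 ω = (b0 : ℂ) := by
    apply Complex.ext <;> simp [hb0, ← (Complex.nonneg_iff.mp (t0_nonneg hω)).2]
  have hϑj : ∀ j, Tj ϑ j = (a j : ℂ) := fun j => by
    apply Complex.ext <;> simp [ha, tj_im hϑ j]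
  have hωj : ∀ j, Tj ω j = (b j : ℂ) := fun j => by
    apply Complex.ext <;> simp [hb, tj_im hω j]
  -- sum equations
  have e0 : T0 ϑ + T0 ω = T0 (coordState n k) := by
    rw [← hsum]; simp [T0]
  have e0r : a0 + b0 = 1 := by
    have := congrArg Complex.re e0
    rw [hφ0, hϑ0, hω0] at this
    simpa using this
  have ej : ∀ j, Tj ϑ j + Tj ω j = Tj (coordState n k) j := by
    intro j; rw [← hsum]; simp [Tj]
  have ejr : ∀ j, a j + b j = if j = k.1 then σ else 0 := by
    intro j
    have := congrArg Complex.re (ej j)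
    rw [hφj, hϑj, hωj] at this
    by_cases h1 : j = k.1 <;> simpa [h1] using this
  -- the inequalities
  have hA : ∑ j, |a j| ≤ a0 := sum_abs_le hϑ
  have hB : ∑ j, |b j| ≤ b0 := sum_abs_le hω
  have habssum : ∀ j, |a j + b j| = if j = k.1 then 1 else 0 := by
    intro j
    rw [ejr]
    by_cases h1 : j = k.1 <;> simp [h1, hσ1]
  have h1sum : ∑ j, |a j + b j| = 1 := by
    rw [Finset.sum_congr rfl (fun j _ => habssum j)]
    simp
  have hslack : ∀ j ∈ Finset.univ, (0:ℝ) ≤ (|a j| + |b j|) - |a j + b j| :=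
    fun j _ => by linarith [abs_add_le (a j) (b j)]
  have hslack0 : ∑ j, ((|a j| + |b j|) - |a j + b j|) = 0 := by
    apply le_antisymm
    · rw [Finset.sum_sub_distrib, h1sum, Finset.sum_add_distrib]
      linarith
    · exact Finset.sum_nonneg hslack
  have hterm : ∀ j, |a j| + |b j| = |a j + b j| := by
    intro j
    have := (Finset.sum_eq_zero_iff_of_nonneg hslack).mp hslack0 j (Finset.mem_univ j)
    linarith
  have hzero : ∀ j, j ≠ k.1 → a j = 0 ∧ b j = 0 := by
    intro j hj
    have h1 := hterm j
    rw [habssum j, if_neg hj] at h1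
    have ha' : |a j| = 0 := by linarith [abs_nonneg (a j), abs_nonneg (b j)]
    have hb' : |b j| = 0 := by linarith [abs_nonneg (a j), abs_nonneg (b j)]
    exact ⟨abs_eq_zero.mp ha', abs_eq_zero.mp hb'⟩
  have hsumab : ∑ j, (|a j| + |b j|) = 1 := by
    rw [Finset.sum_congr rfl (fun j _ => hterm j), h1sum]
  have ha0eq : a0 = ∑ j, |a j| := by
    rw [Finset.sum_add_distrib] at hsumab
    linarith
  have hb0eq : b0 = ∑ j, |b j| := by
    rw [Finset.sum_add_distrib] at hsumab
    linarith
  have hsuma : ∑ j, |a j| = |a k.1| := by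
    apply Finset.sum_eq_single
    · intro j _ hj; rw [(hzero j hj).1, abs_zero]
    · intro h; exact absurd (Finset.mem_univ k.1) h
  have hsumb : ∑ j, |b j| = |b k.1| := by
    apply Finset.sum_eq_single
    · intro j _ hj; rw [(hzero j hj).2, abs_zero]
    · intro h; exact absurd (Finset.mem_univ k.1) h
  -- define s
  set s : ℝ := σ * a k.1 with hsdef
  have hak : a k.1 = σ * s := by rw [hsdef]; rw [← mul_assoc, hσσ, one_mul]
  have habk : a k.1 + b k.1 = σ := by have := ejr k.1; simpa using this
  have hbk : b k.1 = σ * (1 - s) := by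
    have h2 : σ * (1 - s) = σ - σ * σ * a k.1 := by rw [hsdef]; ring
    rw [h2, hσσ, one_mul]
    linarith [habk]
  have habs_s : |a k.1| = |s| := by rw [hak, abs_mul, hσ1, one_mul]
  have habs_1s : |b k.1| = |1 - s| := by rw [hbk, abs_mul, hσ1, one_mul]
  have hkey : |s| + |1 - s| = 1 := by
    have h1 := hterm k.1
    rw [habssum, if_pos rfl, habs_s, habs_1s] at h1
    linarith
  have hs0 : 0 ≤ s := by
    rcases abs_cases s with ⟨h, _⟩ | ⟨h, _⟩ <;>
      rcases abs_cases (1 - s) with ⟨h', _⟩ | ⟨h', _⟩ <;> linarith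
  have hs1 : s ≤ 1 := by
    rcases abs_cases s with ⟨h, _⟩ | ⟨h, _⟩ <;>
      rcases abs_cases (1 - s) with ⟨h', _⟩ | ⟨h', _⟩ <;> linarith
  have ha0s : a0 = s := by
    rw [ha0eq, hsuma, habs_s, abs_of_nonneg hs0]
  have hb0s : b0 = 1 - s := by
    rw [hb0eq, hsumb, habs_1s, abs_of_nonneg (by linarith)]
  refine ⟨s, hs0, hs1, ?_, ?_⟩
  · apply eq_smul_coord k ϑ s
    · rw [hϑ0, ha0s]
    · intro j
      rw [hϑj]
      by_cases h1 : j = k.1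
      · subst h1
        rw [hak]
        by_cases h2 : k.2 = 0 <;> simp [hσdef, h2] <;> push_cast <;> ring
      · rw [(hzero j h1).1, if_neg h1]; simp
  · apply eq_smul_coord k ω (1 - s)
    · rw [hω0, hb0s]
    · intro j
      rw [hωj]
      by_cases h1 : j = k.1
      · subst h1
        rw [hbk]
        by_cases h2 : k.2 = 0 <;> simp [hσdef, h2] <;> push_cast <;> ring
      · rw [(hzero j h1).2, if_neg h1]; simp
end

section
/- Fix n ≥ 1 and k ∈ {1, …, n}. Let D_n ⊆ M_{2n}(ℂ) be the C*-algebra of block-diagonal matrices ⊕_{j=1}^n a_j with a_j ∈ M_2(ℂ) (so D_n is *-isomorphic to the direct sum of n copies of M_2(ℂ)), and let π_k : D_n → M_2(ℂ) be the projection onto the k-th 2×2 diagonal block. If Φ : D_n → M_2(ℂ) is a unital completely positive linear map satisfying Φ(x) = π_k(x) for every x ∈ X_n, then Φ = π_k. In other words, π_k is the unique ucp extension of its restriction to X_n, so each π_k is a boundary representation of D_n for X_n. -/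
open scoped ComplexOrder

/-- Complete positivity for a linear map from a matrix operator system `S` into
`M₂(ℂ)`. -/
def IsCPFun {ι : Type} [Fintype ι] (S : Submodule ℂ (Matrix ι ι ℂ))
    (φ : S →ₗ[ℂ] Matrix (Fin 2) (Fin 2) ℂ) : Prop :=
  ∀ (m : ℕ) (x : Fin m → Fin m → S),
    (blockMat fun i j => (x i j : Matrix ι ι ℂ)).PosSemidef →
    (blockMat fun i j => φ (x i j)).PosSemidef

/-- The C*-algebra `Dₙ ⊆ M_{2n}(ℂ)` of block-diagonal matrices `⊕ⱼ aⱼ` with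
`aⱼ ∈ M₂(ℂ)` (as a subspace; it is closed under multiplication and adjoints). -/
noncomputable def DSys (n : ℕ) : Submodule ℂ (Matrix (Fin n × Fin 2) (Fin n × Fin 2) ℂ) where
  carrier := {x | ∀ p q, p.1 ≠ q.1 → x p q = 0}
  add_mem' := fun ha hb p q h => by simp [Matrix.add_apply, ha p q h, hb p q h]
  zero_mem' := fun p q _ => rfl
  smul_mem' := fun c a ha p q h => by simp [Matrix.smul_apply, ha p q h]

theorem one_mem_DSys (n : ℕ) : (1 : Matrix (Fin n × Fin 2) (Fin n × Fin 2) ℂ) ∈ DSys n :=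
  fun _ _ h => Matrix.one_apply_ne fun e => h (congrArg Prod.fst e)

/-- Projection of a `2n × 2n` matrix onto its `k`-th `2 × 2` diagonal block. -/
noncomputable def projBlock (n : ℕ) (k : Fin n) :
    Matrix (Fin n × Fin 2) (Fin n × Fin 2) ℂ →ₗ[ℂ] Matrix (Fin 2) (Fin 2) ℂ where
  toFun x := Matrix.of fun i j => x (k, i) (k, j)
  map_add' _ _ := rfl
  map_smul' _ _ := rfl

open Matrix

lemma blockMat_conjTranspose {ι : Type} {m : ℕ} (x : Fin m → Fin m → Matrix ι ι ℂ) :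
    (blockMat x)ᴴ = blockMat fun i j => (x j i)ᴴ := rfl

lemma blockMat_mul {ι : Type} [Fintype ι] {m : ℕ} (x y : Fin m → Fin m → Matrix ι ι ℂ) :
    blockMat x * blockMat y = blockMat fun i j => ∑ l, x i l * y l j := by
  ext p q
  simp [blockMat, Matrix.mul_apply, Matrix.sum_apply, Fintype.sum_prod_type]

lemma stdBasis_conjT {m' : Type} [DecidableEq m'] (i j : m') :
    (Matrix.single i j (1:ℂ))ᴴ = Matrix.single j i 1 := by
  ext a b
  simp [Matrix.single, Matrix.conjTranspose_apply, and_comm, apply_ite (star : ℂ → ℂ)]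

lemma psd_diag_nonneg {m' : Type} [Fintype m'] [DecidableEq m'] {M : Matrix m' m' ℂ}
    (hM : M.PosSemidef) (p : m') : 0 ≤ M p p := by
  exact hM.diag_nonneg

lemma psd_trace_nonneg {m' : Type} [Fintype m'] [DecidableEq m'] {M : Matrix m' m' ℂ}
    (hM : M.PosSemidef) : 0 ≤ M.trace :=
  Finset.sum_nonneg fun p _ => psd_diag_nonneg hM p

lemma psd_trace_eq_zero {m' : Type} [Fintype m'] [DecidableEq m'] {M : Matrix m' m' ℂ}
    (hM : M.PosSemidef) (h : M.trace = 0) : M = 0 := by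
  exact hM.trace_eq_zero_iff.1 h

lemma schwarz {Q B : Matrix (Fin 2) (Fin 2) ℂ}
    (h : (blockMat ![![Q, Bᴴ], ![B, 1]]).PosSemidef) : (Q - Bᴴ * B).PosSemidef := by
  set C : Matrix (Fin 2 × Fin 2) (Fin 2) ℂ :=
    Matrix.of fun p q => if p.1 = 0 then (1 : Matrix (Fin 2) (Fin 2) ℂ) p.2 q else -(B p.2 q)
    with hC
  have key : Cᴴ * blockMat ![![Q, Bᴴ], ![B, 1]] * C = Q - Bᴴ * B := by
    ext i j
    simp [hC, blockMat, Matrix.mul_apply, Matrix.conjTranspose_apply, Fintype.sum_prod_type,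
      Fin.sum_univ_two, Matrix.one_apply, Matrix.sub_apply, Matrix.sum_apply]
    fin_cases i <;> fin_cases j <;> simp <;> ring
  have := h.conjTranspose_mul_mul_same C
  rwa [key] at this

/-- matrix units of `DSys n` -/
noncomputable def eD (n : ℕ) (j : Fin n) (p q : Fin 2) : DSys n :=
  ⟨Matrix.single (j, p) (j, q) 1, by
    intro a b h
    simp only [Matrix.single, Matrix.of_apply, ite_eq_right_iff, one_ne_zero]
    rintro ⟨rfl, rfl⟩
    exact h rfl⟩

lemma eD_01_mem_XSys (n : ℕ) (j : Fin n) :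
    ((eD n j 0 1 : DSys n) : Matrix (Fin n × Fin 2) (Fin n × Fin 2) ℂ) ∈ XSys n := by
  apply Submodule.subset_span
  refine ⟨0, Pi.single j 1, 0, ?_⟩
  ext ⟨a, i⟩ ⟨b, l⟩
  by_cases hab : a = b
  · subst hab
    rcases eq_or_ne j a with hja | hja
    · fin_cases i <;> fin_cases l <;>
        simp [eD, xMat, Matrix.single, Pi.single_apply, hja, Prod.ext_iff]
    · fin_cases i <;> fin_cases l <;>
        simp [eD, xMat, Matrix.single, Pi.single_apply, hja, Ne.symm hja, Prod.ext_iff]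
  · simp only [eD, xMat, Matrix.of_apply, Matrix.single, hab, if_false]
    rw [if_neg]
    rintro ⟨h1, h2⟩
    exact hab ((congrArg Prod.fst h1).symm.trans (congrArg Prod.fst h2))

lemma eD_10_mem_XSys (n : ℕ) (j : Fin n) :
    ((eD n j 1 0 : DSys n) : Matrix (Fin n × Fin 2) (Fin n × Fin 2) ℂ) ∈ XSys n := by
  apply Submodule.subset_span
  refine ⟨0, 0, Pi.single j 1, ?_⟩
  ext ⟨a, i⟩ ⟨b, l⟩
  by_cases hab : a = b
  · subst hab
    rcases eq_or_ne j a with hja | hja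
    · fin_cases i <;> fin_cases l <;>
        simp [eD, xMat, Matrix.single, Pi.single_apply, hja, Prod.ext_iff]
    · fin_cases i <;> fin_cases l <;>
        simp [eD, xMat, Matrix.single, Pi.single_apply, hja, Ne.symm hja, Prod.ext_iff]
  · simp only [eD, xMat, Matrix.of_apply, Matrix.single, hab, if_false]
    rw [if_neg]
    rintro ⟨h1, h2⟩
    exact hab ((congrArg Prod.fst h1).symm.trans (congrArg Prod.fst h2))

lemma projBlock_eD (n : ℕ) (k j : Fin n) (p q : Fin 2) :
    projBlock n k ((eD n j p q : DSys n) : Matrix (Fin n × Fin 2) (Fin n × Fin 2) ℂ)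
      = if j = k then Matrix.single p q 1 else 0 := by
  ext i l
  change ((eD n j p q : DSys n) : Matrix (Fin n × Fin 2) (Fin n × Fin 2) ℂ) (k, i) (k, l) = _
  by_cases hjk : j = k <;>
    simp [projBlock, eD, Matrix.single, hjk, Prod.ext_iff]

lemma sum_stdBasis_diag {m' : Type} [Fintype m'] [DecidableEq m'] :
    (∑ u : m', Matrix.single u u (1:ℂ)) = 1 := by
  ext a b
  simp only [Matrix.sum_apply, Matrix.single, Matrix.of_apply, Matrix.one_apply, ite_and]
  rw [Finset.sum_ite_eq']
  simp [eq_comm]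

lemma sum_eD_diag (n : ℕ) :
    (∑ j : Fin n, ∑ p : Fin 2, eD n j p p) = (⟨1, one_mem_DSys n⟩ : DSys n) := by
  apply Subtype.ext
  have h1 : ((∑ j : Fin n, ∑ p : Fin 2, eD n j p p : DSys n) : Matrix (Fin n × Fin 2) (Fin n × Fin 2) ℂ)
      = ∑ j : Fin n, ∑ p : Fin 2, Matrix.single ((j,p) : Fin n × Fin 2) (j,p) (1:ℂ) := by
    push_cast; rfl
  rw [h1, show (∑ j : Fin n, ∑ p : Fin 2, Matrix.single ((j,p) : Fin n × Fin 2) (j,p) (1:ℂ))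
      = ∑ u : Fin n × Fin 2, Matrix.single u u 1 from
    (Fintype.sum_prod_type (fun u : Fin n × Fin 2 => Matrix.single u u (1:ℂ))).symm,
    sum_stdBasis_diag]

lemma eD_diag_psd (n : ℕ) (j : Fin n) (p : Fin 2) :
    ((eD n j p p : DSys n) : Matrix (Fin n × Fin 2) (Fin n × Fin 2) ℂ).PosSemidef := by
  have : ((eD n j p p : DSys n) : Matrix (Fin n × Fin 2) (Fin n × Fin 2) ℂ)
      = (Matrix.single (j,p) (j,p) (1:ℂ))ᴴ * Matrix.single (j,p) (j,p) 1 := by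
    rw [stdBasis_conjT, Matrix.single_mul_single_same, one_mul]; rfl
  rw [this]
  exact Matrix.posSemidef_conjTranspose_mul_self _

lemma pairzero {P R : Matrix (Fin 2) (Fin 2) ℂ} (hP : P.PosSemidef) (hR : R.PosSemidef)
    (h : P + R = 0) : P = 0 ∧ R = 0 := by
  have t : P.trace + R.trace = 0 := by rw [← Matrix.trace_add, h, Matrix.trace_zero]
  obtain ⟨h1, h2⟩ := (add_eq_zero_iff_of_nonneg (psd_trace_nonneg hP) (psd_trace_nonneg hR)).1 t
  exact ⟨psd_trace_eq_zero hP h1, psd_trace_eq_zero hR h2⟩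

lemma E_sum_one : Matrix.single (0 : Fin 2) (0 : Fin 2) (1:ℂ) +
    Matrix.single (1 : Fin 2) (1 : Fin 2) (1:ℂ) = 1 := by
  ext a b
  fin_cases a <;> fin_cases b <;>
    simp [Matrix.single, Matrix.one_apply]


/-- Each block projection `π_k : Dₙ → M₂(ℂ)` is the unique ucp extension of its
restriction to `Xₙ`: every unital completely positive map `Φ : Dₙ → M₂(ℂ)` that agrees
with `π_k` on `Xₙ` equals `π_k`.  Hence `π_k` is a boundary representation of `Dₙ`
for `Xₙ`. -/
theorem block_projection_unique_ucp_extension (n : ℕ) (hn : 1 ≤ n) (k : Fin n)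
    (Φ : DSys n →ₗ[ℂ] Matrix (Fin 2) (Fin 2) ℂ)
    (hΦcp : IsCPFun (DSys n) Φ)
    (hΦ1 : Φ ⟨1, one_mem_DSys n⟩ = 1)
    (hext : ∀ x : DSys n, (x : Matrix (Fin n × Fin 2) (Fin n × Fin 2) ℂ) ∈ XSys n →
      Φ x = projBlock n k (x : Matrix (Fin n × Fin 2) (Fin n × Fin 2) ℂ)) :
    ∀ x : DSys n, Φ x = projBlock n k (x : Matrix (Fin n × Fin 2) (Fin n × Fin 2) ℂ) := by
  -- positivity transfer
  have hpos : ∀ s : DSys n,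
      ((s : DSys n) : Matrix (Fin n × Fin 2) (Fin n × Fin 2) ℂ).PosSemidef → (Φ s).PosSemidef := by
    intro s hs
    have h1 : (blockMat fun _ _ : Fin 1 =>
        ((s : DSys n) : Matrix (Fin n × Fin 2) (Fin n × Fin 2) ℂ)).PosSemidef :=
      hs.submatrix Prod.snd
    have h2 := hΦcp 1 (fun _ _ => s) h1
    exact h2.submatrix fun i => ((0 : Fin 1), i)
  -- values on off-diagonal matrix units
  have h01 : ∀ j, Φ (eD n j 0 1) =
      if j = k then Matrix.single (0:Fin 2) 1 1 else 0 := fun j => by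
    rw [hext _ (eD_01_mem_XSys n j), projBlock_eD]
  have h10 : ∀ j, Φ (eD n j 1 0) =
      if j = k then Matrix.single (1:Fin 2) 0 1 else 0 := fun j => by
    rw [hext _ (eD_10_mem_XSys n j), projBlock_eD]
  -- Schwarz inequality, first instance : Φ(e_k 1 1) ≥ E11
  have hQ1 : (Φ (eD n k 1 1) - (Matrix.single (0:Fin 2) 1 (1:ℂ))ᴴ *
      Matrix.single (0:Fin 2) 1 (1:ℂ)).PosSemidef := by
    apply schwarz
    set x2 : Fin 2 → Fin 2 → DSys n :=
      ![![eD n k 1 1, eD n k 1 0], ![eD n k 0 1, ⟨1, one_mem_DSys n⟩]] with hx2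
    have hbig : (blockMat fun i j =>
        ((x2 i j : DSys n) : Matrix (Fin n × Fin 2) (Fin n × Fin 2) ℂ)).PosSemidef := by
      set y : Fin 2 → Fin 2 → Matrix (Fin n × Fin 2) (Fin n × Fin 2) ℂ :=
        ![![0, 0], ![Matrix.single (k,0) (k,1) 1, 1]] with hy
      have hfac : (blockMat fun i j =>
          ((x2 i j : DSys n) : Matrix (Fin n × Fin 2) (Fin n × Fin 2) ℂ))
          = (blockMat y)ᴴ * blockMat y := by
        rw [blockMat_conjTranspose, blockMat_mul]
        refine congrArg blockMat (funext fun i => funext fun j => ?_)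
        fin_cases i <;> fin_cases j <;>
          simp [hy, hx2, eD, Fin.sum_univ_two, stdBasis_conjT]
      rw [hfac]
      exact Matrix.posSemidef_conjTranspose_mul_self _
    have hcp2 := hΦcp 2 x2 hbig
    have hrw : (blockMat fun i j => Φ (x2 i j)) =
        blockMat ![![Φ (eD n k 1 1), (Matrix.single (0:Fin 2) 1 (1:ℂ))ᴴ],
          ![Matrix.single (0:Fin 2) 1 (1:ℂ), 1]] := by
      refine congrArg blockMat (funext fun i => funext fun j => ?_)
      fin_cases i <;> fin_cases j <;>
        simp [hx2, h01 k, h10 k, hΦ1, stdBasis_conjT]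
    rwa [hrw] at hcp2
  -- Schwarz inequality, second instance : Φ(e_k 0 0) ≥ E00
  have hQ0 : (Φ (eD n k 0 0) - (Matrix.single (1:Fin 2) 0 (1:ℂ))ᴴ *
      Matrix.single (1:Fin 2) 0 (1:ℂ)).PosSemidef := by
    apply schwarz
    set x2 : Fin 2 → Fin 2 → DSys n :=
      ![![eD n k 0 0, eD n k 0 1], ![eD n k 1 0, ⟨1, one_mem_DSys n⟩]] with hx2
    have hbig : (blockMat fun i j =>
        ((x2 i j : DSys n) : Matrix (Fin n × Fin 2) (Fin n × Fin 2) ℂ)).PosSemidef := by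
      set y : Fin 2 → Fin 2 → Matrix (Fin n × Fin 2) (Fin n × Fin 2) ℂ :=
        ![![0, 0], ![Matrix.single (k,1) (k,0) 1, 1]] with hy
      have hfac : (blockMat fun i j =>
          ((x2 i j : DSys n) : Matrix (Fin n × Fin 2) (Fin n × Fin 2) ℂ))
          = (blockMat y)ᴴ * blockMat y := by
        rw [blockMat_conjTranspose, blockMat_mul]
        refine congrArg blockMat (funext fun i => funext fun j => ?_)
        fin_cases i <;> fin_cases j <;>
          simp [hy, hx2, eD, Fin.sum_univ_two, stdBasis_conjT]
      rw [hfac]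
      exact Matrix.posSemidef_conjTranspose_mul_self _
    have hcp2 := hΦcp 2 x2 hbig
    have hrw : (blockMat fun i j => Φ (x2 i j)) =
        blockMat ![![Φ (eD n k 0 0), (Matrix.single (1:Fin 2) 0 (1:ℂ))ᴴ],
          ![Matrix.single (1:Fin 2) 0 (1:ℂ), 1]] := by
      refine congrArg blockMat (funext fun i => funext fun j => ?_)
      fin_cases i <;> fin_cases j <;>
        simp [hx2, h01 k, h10 k, hΦ1, stdBasis_conjT]
    rwa [hrw] at hcp2
  -- simplify the products
  rw [stdBasis_conjT, Matrix.single_mul_single_same, one_mul] at hQ1 hQ0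
  -- the sum identity
  have hsum : (∑ j : Fin n, (Φ (eD n j 0 0) + Φ (eD n j 1 1))) = 1 := by
    have h := congrArg Φ (sum_eD_diag n)
    rw [map_sum, hΦ1] at h
    rw [← h]
    exact Finset.sum_congr rfl fun j _ => by rw [map_sum, Fin.sum_univ_two]
  -- the zero-sum family
  set f : Fin n → Matrix (Fin 2) (Fin 2) ℂ := fun j =>
    if j = k then (Φ (eD n k 0 0) - Matrix.single 0 0 1)
      + (Φ (eD n k 1 1) - Matrix.single 1 1 1)
    else Φ (eD n j 0 0) + Φ (eD n j 1 1) with hf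
  have hfs : (∑ j : Fin n, f j) = 0 := by
    have step : ∀ j : Fin n, f j = (Φ (eD n j 0 0) + Φ (eD n j 1 1))
        + (if j = k then -(Matrix.single (0:Fin 2) 0 (1:ℂ) +
            Matrix.single 1 1 1) else 0) := by
      intro j
      by_cases hj : j = k
      · subst hj; simp [hf]; abel
      · simp [hf, hj]
    rw [Finset.sum_congr rfl fun j _ => step j, Finset.sum_add_distrib, hsum,
      Finset.sum_ite_eq' Finset.univ k]
    simp [E_sum_one]
  have hfpsd : ∀ j : Fin n, (f j).PosSemidef := by
    intro j
    by_cases hj : j = k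
    · subst hj; simp only [hf, if_pos rfl]; exact hQ0.add hQ1
    · simp only [hf, if_neg hj]
      exact (hpos _ (eD_diag_psd n j 0)).add (hpos _ (eD_diag_psd n j 1))
  have hfz : ∀ j : Fin n, f j = 0 := by
    have htr : ∀ j ∈ Finset.univ, (0:ℂ) ≤ (f j).trace := fun j _ => psd_trace_nonneg (hfpsd j)
    have hts : (∑ j : Fin n, (f j).trace) = 0 := by
      rw [← Matrix.trace_sum, hfs, Matrix.trace_zero]
    intro j
    exact psd_trace_eq_zero (hfpsd j) ((Finset.sum_eq_zero_iff_of_nonneg htr).1 hts j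
      (Finset.mem_univ j))
  -- values on diagonal matrix units
  have h00 : ∀ j, Φ (eD n j 0 0) =
      if j = k then Matrix.single (0:Fin 2) 0 1 else 0 := by
    intro j
    by_cases hj : j = k
    · subst hj
      have := hfz j
      rw [hf] at this; simp only [if_pos rfl] at this
      have := (pairzero hQ0 hQ1 this).1
      rw [sub_eq_zero] at this
      simp [this]
    · have := hfz j
      rw [hf] at this; simp only [if_neg hj] at this
      have := (pairzero (hpos _ (eD_diag_psd n j 0)) (hpos _ (eD_diag_psd n j 1)) this).1
      simp [this, hj]
  have h11 : ∀ j, Φ (eD n j 1 1) =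
      if j = k then Matrix.single (1:Fin 2) 1 1 else 0 := by
    intro j
    by_cases hj : j = k
    · subst hj
      have := hfz j
      rw [hf] at this; simp only [if_pos rfl] at this
      have := (pairzero hQ0 hQ1 this).2
      rw [sub_eq_zero] at this
      simp [this]
    · have := hfz j
      rw [hf] at this; simp only [if_neg hj] at this
      have := (pairzero (hpos _ (eD_diag_psd n j 0)) (hpos _ (eD_diag_psd n j 1)) this).2
      simp [this, hj]
  -- agreement on all matrix units
  have hkey : ∀ (j : Fin n) (p q : Fin 2), Φ (eD n j p q) =
      projBlock n k ((eD n j p q : DSys n) : Matrix (Fin n × Fin 2) (Fin n × Fin 2) ℂ) := by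
    intro j p q
    fin_cases p <;> fin_cases q
    · show Φ (eD n j 0 0) = projBlock n k
        ((eD n j 0 0 : DSys n) : Matrix (Fin n × Fin 2) (Fin n × Fin 2) ℂ)
      rw [projBlock_eD, h00]
    · exact hext _ (eD_01_mem_XSys n j)
    · exact hext _ (eD_10_mem_XSys n j)
    · show Φ (eD n j 1 1) = projBlock n k
        ((eD n j 1 1 : DSys n) : Matrix (Fin n × Fin 2) (Fin n × Fin 2) ℂ)
      rw [projBlock_eD, h11]
  -- decomposition of a general element and conclusion
  intro x
  have hx : x = ∑ j : Fin n, ∑ p : Fin 2, ∑ q : Fin 2,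
      ((x : DSys n) : Matrix (Fin n × Fin 2) (Fin n × Fin 2) ℂ) (j,p) (j,q) • eD n j p q := by
    apply Subtype.ext
    push_cast
    ext ⟨a, i⟩ ⟨b, l⟩
    simp only [Matrix.sum_apply, Matrix.smul_apply, eD, Matrix.single, Matrix.of_apply,
      smul_eq_mul, mul_ite, mul_one, mul_zero, Prod.mk.injEq]
    by_cases hab : a = b
    · subst hab
      rw [Finset.sum_eq_single a]
      · simp [Finset.sum_ite_eq', ite_and]
      · intro c _ hca
        apply Finset.sum_eq_zero; intro p _; apply Finset.sum_eq_zero; intro q _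
        simp [hca]
      · simp
    · rw [x.2 (a,i) (b,l) hab]
      symm
      apply Finset.sum_eq_zero; intro c _
      apply Finset.sum_eq_zero; intro p _
      apply Finset.sum_eq_zero; intro q _
      split
      · next h => exact absurd (h.1.1.symm.trans h.2.1) hab
      · rfl
  conv_lhs => rw [hx]
  conv_rhs => rw [hx]
  show Φ _ = ((projBlock n k).comp (DSys n).subtype) _
  simp only [map_sum, LinearMap.map_smul]
  refine Finset.sum_congr rfl fun j _ => Finset.sum_congr rfl fun p _ =>
    Finset.sum_congr rfl fun q _ => ?_
  rw [hkey j p q]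
  rfl
end

section
/- Let S ⊆ M_N(ℂ) and T ⊆ M_M(ℂ) be (finite-dimensional) matrix operator systems and let φ : S → T be a completely positive linear map. Then: (1) the linear adjoint φ^d : T^d → S^d, defined by φ^d(γ) = γ ∘ φ for γ ∈ T^d, is completely positive with respect to the dual matrix orderings; and (2) φ is pure in CP(S, T) if and only if φ^d is pure in CP(T^d, S^d). -/
open scoped ComplexOrder Matrix

/-- The linear map `x ↦ [γᵢⱼ(x)]` associated with a matrix of linear functionals. -/
def toMatMap {E : Type*} [AddCommGroup E] [Module ℂ E] {m : ℕ}
    (γ : Fin m → Fin m → Module.Dual ℂ E) : E →ₗ[ℂ] Matrix (Fin m) (Fin m) ℂ where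
  toFun x := Matrix.of fun i j => γ i j x
  map_add' x y := by ext i j; simp [Matrix.add_apply]
  map_smul' c x := by ext i j; simp [Matrix.smul_apply]

/-- The dual matrix ordering: a matrix `[γᵢⱼ]` of functionals on a matrix operator
system `S` is positive precisely when `x ↦ [γᵢⱼ(x)]` is completely positive. -/
def DualPos {ι : Type} [Fintype ι] (S : Submodule ℂ (Matrix ι ι ℂ)) {m : ℕ}
    (γ : Fin m → Fin m → Module.Dual ℂ S) : Prop :=
  ∀ (r : ℕ) (x : Fin r → Fin r → S),
    (blockMat fun a b => (x a b : Matrix ι ι ℂ)).PosSemidef →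
    (blockMat fun a b => toMatMap γ (x a b)).PosSemidef

/-- Complete positivity for a linear map between the duals of matrix operator systems,
with respect to the dual matrix orderings. -/
def IsCPDual {ι κ : Type} [Fintype ι] [Fintype κ]
    (S : Submodule ℂ (Matrix ι ι ℂ)) (T : Submodule ℂ (Matrix κ κ ℂ))
    (ψ : Module.Dual ℂ T →ₗ[ℂ] Module.Dual ℂ S) : Prop :=
  ∀ (m : ℕ) (γ : Fin m → Fin m → Module.Dual ℂ T),
    DualPos T γ → DualPos S fun i j => ψ (γ i j)

/-- Purity in `CP(S, T)`. -/
def IsPureCP {ι κ : Type} [Fintype ι] [Fintype κ]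
    (S : Submodule ℂ (Matrix ι ι ℂ)) (T : Submodule ℂ (Matrix κ κ ℂ))
    (φ : S →ₗ[ℂ] T) : Prop :=
  ∀ ϑ ω : S →ₗ[ℂ] T, IsCP S T ϑ → IsCP S T ω → ϑ + ω = φ →
    ∃ s : ℝ, 0 ≤ s ∧ s ≤ 1 ∧ ϑ = (s : ℂ) • φ ∧ ω = ((1 - s : ℝ) : ℂ) • φ

/-- Purity in `CP(T^d, S^d)`. -/
def IsPureCPDual {ι κ : Type} [Fintype ι] [Fintype κ]
    (S : Submodule ℂ (Matrix ι ι ℂ)) (T : Submodule ℂ (Matrix κ κ ℂ))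
    (ψ : Module.Dual ℂ T →ₗ[ℂ] Module.Dual ℂ S) : Prop :=
  ∀ ϑ ω : Module.Dual ℂ T →ₗ[ℂ] Module.Dual ℂ S,
    IsCPDual S T ϑ → IsCPDual S T ω → ϑ + ω = ψ →
    ∃ s : ℝ, 0 ≤ s ∧ s ≤ 1 ∧ ϑ = (s : ℂ) • ψ ∧ ω = ((1 - s : ℝ) : ℂ) • ψ

section Auxiliary

open Matrix

lemma posSemidef_of_quad {n : Type*} [Fintype n] (A : Matrix n n ℂ)
    (h : ∀ v : n → ℂ, 0 ≤ star v ⬝ᵥ A *ᵥ v) : A.PosSemidef := by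
  have key : ∀ v : n → ℂ, star v ⬝ᵥ Aᴴ *ᵥ v = star (star v ⬝ᵥ A *ᵥ v) := by
    intro v
    simp only [dotProduct, mulVec, conjTranspose_apply, star_sum, star_mul', Pi.star_apply,
      star_star, Finset.mul_sum, Finset.sum_mul]
    rw [Finset.sum_comm]
    refine Finset.sum_congr rfl fun i _ => Finset.sum_congr rfl fun j _ => by ring
  have hq : ∀ v : n → ℂ, star v ⬝ᵥ (A - Aᴴ) *ᵥ v = 0 := by
    intro v
    have h0 := h v
    have him : star (star v ⬝ᵥ A *ᵥ v) = star v ⬝ᵥ A *ᵥ v := by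
      have := (Complex.le_def.mp h0).2
      exact Complex.conj_eq_iff_im.mpr this.symm
    rw [Matrix.sub_mulVec, dotProduct_sub, key, him, sub_self]
  have hB : (A - Aᴴ)ᴴ = 0 := by
    classical
    have hT : Matrix.toEuclideanLin ((A - Aᴴ)ᴴ) = 0 := by
      rw [← inner_map_self_eq_zero]
      intro x
      rw [Matrix.toEuclideanLin_apply, EuclideanSpace.inner_eq_star_dotProduct]
      rw [show (WithLp.toLp 2 ((A - Aᴴ)ᴴ *ᵥ x.ofLp)).ofLp =
          (A - Aᴴ)ᴴ *ᵥ x.ofLp from rfl]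
      rw [Matrix.star_mulVec, Matrix.conjTranspose_conjTranspose]
      rw [dotProduct_comm]
      rw [← Matrix.dotProduct_mulVec]
      exact hq _
    exact Matrix.toEuclideanLin.map_eq_zero_iff.mp hT
  have herm : A.IsHermitian := by
    have : A - Aᴴ = 0 := Matrix.conjTranspose_eq_zero.mp hB
    exact (sub_eq_zero.mp this).symm
  exact Matrix.PosSemidef.of_dotProduct_mulVec_nonneg herm h

lemma sum_ite_irrel' {α M : Type*} [AddCommMonoid M] (s : Finset α) (p : Prop) [Decidable p]
    (f : α → M) : (∑ a ∈ s, if p then f a else 0) = if p then ∑ a ∈ s, f a else 0 := by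
  split <;> simp

lemma isCPDual_of_isCP {ι κ : Type} [Fintype ι] [Fintype κ]
    {S : Submodule ℂ (Matrix ι ι ℂ)} {T : Submodule ℂ (Matrix κ κ ℂ)}
    {φ : S →ₗ[ℂ] T} (hφ : IsCP S T φ) : IsCPDual S T φ.dualMap := by
  intro m γ hγ r x hx
  exact hγ r (fun a b => φ (x a b)) (hφ r x hx)

lemma isCP_of_isCPDual {ι κ : Type} [Fintype ι] [Fintype κ] [DecidableEq κ]
    {S : Submodule ℂ (Matrix ι ι ℂ)} {T : Submodule ℂ (Matrix κ κ ℂ)}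
    {φ : S →ₗ[ℂ] T} (h : IsCPDual S T φ.dualMap) : IsCP S T φ := by
  intro m x hx
  apply posSemidef_of_quad
  intro v
  let γ : Fin m → Fin m → Module.Dual ℂ T := fun i j =>
    { toFun := fun y => (star fun k => v (i, k)) ⬝ᵥ ((y : Matrix κ κ ℂ) *ᵥ fun l => v (j, l))
      map_add' := fun y z => by simp [Matrix.add_mulVec]
      map_smul' := fun c y => by simp [Matrix.smul_mulVec] }
  have hγ : DualPos T γ := by
    intro r y hy
    let V : Matrix (Fin r × κ) (Fin r × Fin m) ℂ :=
      Matrix.of fun p q => if p.1 = q.1 then v (q.2, p.2) else 0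
    have hEq : (blockMat fun a b => toMatMap γ (y a b)) =
        Vᴴ * (blockMat fun a b => (y a b : Matrix κ κ ℂ)) * V := by
      ext ⟨a, i⟩ ⟨b, j⟩
      simp only [blockMat, toMatMap, Matrix.mul_apply, Matrix.conjTranspose_apply,
        Matrix.of_apply, LinearMap.coe_mk, AddHom.coe_mk, dotProduct, Matrix.mulVec,
        Pi.star_apply, Fintype.sum_prod_type, V, γ, ite_mul, mul_ite, zero_mul, mul_zero,
        apply_ite (star : ℂ → ℂ), star_zero, sum_ite_irrel', Finset.sum_ite_eq,
        Finset.sum_ite_eq', Finset.mem_univ, if_true, Finset.mul_sum, Finset.sum_mul]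
      rw [Finset.sum_comm]
      refine Finset.sum_congr rfl fun k _ => Finset.sum_congr rfl fun l _ => by ring
    rw [hEq]
    exact hy.conjTranspose_mul_mul_same V
  have h2 := h m γ hγ m x hx
  have h3 := h2.dotProduct_mulVec_nonneg fun p => if p.1 = p.2 then (1 : ℂ) else 0
  refine le_of_le_of_eq h3 ?_
  simp only [blockMat, toMatMap, dotProduct, Matrix.mulVec, Matrix.of_apply,
    LinearMap.coe_mk, AddHom.coe_mk, LinearMap.dualMap_apply, Pi.star_apply,
    Fintype.sum_prod_type, γ, ite_mul, mul_ite, zero_mul, mul_zero,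
    apply_ite (star : ℂ → ℂ), star_zero, star_one, one_mul, sum_ite_irrel',
    Finset.sum_ite_eq, Finset.sum_ite_eq', Finset.mem_univ, if_true,
    Finset.mul_sum, Finset.sum_mul]
  simp only [mul_one]
  exact Finset.sum_congr rfl fun a _ => Finset.sum_comm

section Dualities
variable {R : Type*} [Field R] {E F : Type*} [AddCommGroup E] [Module R E]
  [AddCommGroup F] [Module R F]

lemma dualMap_add' (f g : E →ₗ[R] F) : (f + g).dualMap = f.dualMap + g.dualMap := by
  ext γ x; simp

lemma dualMap_smul' (c : R) (f : E →ₗ[R] F) : (c • f).dualMap = c • f.dualMap := by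
  ext γ x; simp

lemma dualMap_inj [FiniteDimensional R E] (f g : E →ₗ[R] F)
    (h : f.dualMap = g.dualMap) : f = g := by
  ext x
  have h1 : ∀ γ : Module.Dual R F, γ (f x - g x) = 0 := by
    intro γ
    have := congrArg (fun ψ => ψ γ x) h
    simpa [sub_eq_zero] using this
  have := (Module.forall_dual_apply_eq_zero_iff R (f x - g x)).mp h1
  exact sub_eq_zero.mp this

lemma dualMap_surj [FiniteDimensional R E] [FiniteDimensional R F]
    (ψ : Module.Dual R F →ₗ[R] Module.Dual R E) :
    ∃ f : E →ₗ[R] F, f.dualMap = ψ := by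
  refine ⟨(Module.evalEquiv R F).symm.toLinearMap ∘ₗ ψ.dualMap ∘ₗ
    (Module.evalEquiv R E).toLinearMap, ?_⟩
  ext γ x
  simp [Module.apply_evalEquiv_symm_apply]

end Dualities

end Auxiliary

/-- For a completely positive map `φ : S → T` between matrix operator systems, the
linear adjoint `φ^d : T^d → S^d`, `φ^d(γ) = γ ∘ φ`, is completely positive for the dual
matrix orderings, and `φ` is pure in `CP(S, T)` if and only if `φ^d` is pure in
`CP(T^d, S^d)`. -/

theorem dual_of_cp_map_is_cp_and_purity_transfers (N M : ℕ)
    (S : Submodule ℂ (Matrix (Fin N) (Fin N) ℂ))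
    (T : Submodule ℂ (Matrix (Fin M) (Fin M) ℂ))
    (hS1 : (1 : Matrix (Fin N) (Fin N) ℂ) ∈ S) (hSstar : ∀ x ∈ S, xᴴ ∈ S)
    (hT1 : (1 : Matrix (Fin M) (Fin M) ℂ) ∈ T) (hTstar : ∀ x ∈ T, xᴴ ∈ T)
    (φ : S →ₗ[ℂ] T) (hφ : IsCP S T φ) :
    IsCPDual S T φ.dualMap ∧ (IsPureCP S T φ ↔ IsPureCPDual S T φ.dualMap) := by
  refine ⟨isCPDual_of_isCP hφ, ?_, ?_⟩
  · intro hpure ϑ ω hϑ hω hsum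
    obtain ⟨α, hα⟩ := dualMap_surj ϑ
    obtain ⟨β, hβ⟩ := dualMap_surj ω
    have hαβ : α + β = φ := by
      apply dualMap_inj
      rw [dualMap_add', hα, hβ, hsum]
    have hαCP : IsCP S T α := isCP_of_isCPDual (hα ▸ hϑ)
    have hβCP : IsCP S T β := isCP_of_isCPDual (hβ ▸ hω)
    obtain ⟨s, h0, h1, he1, he2⟩ := hpure α β hαCP hβCP hαβ
    refine ⟨s, h0, h1, ?_, ?_⟩
    · rw [← hα, he1, dualMap_smul']
    · rw [← hβ, he2, dualMap_smul']
  · intro hpure ϑ ω hϑ hω hsum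
    obtain ⟨s, h0, h1, he1, he2⟩ := hpure ϑ.dualMap ω.dualMap
      (isCPDual_of_isCP hϑ) (isCPDual_of_isCP hω)
      (by rw [← dualMap_add', hsum])
    refine ⟨s, h0, h1, ?_, ?_⟩
    · exact dualMap_inj _ _ (by rw [he1, ← dualMap_smul'])
    · exact dualMap_inj _ _ (by rw [he2, ← dualMap_smul'])
end
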